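/- arXiv:math/0405008 — 6 statements merged into one kernel-verified Lean document; each statement's English description precedes it below -/
import Mathlib

section
/- Let N = ker φ and N′ = [N,N]. The restriction of D to N is a surjective group homomorphism N → Z_1(G) whose kernel is exactly N′, and it satisfies D(w a w^{-1}) = φ(w)·D(a) for all w ∈ F_d and a ∈ N. Hence D induces a G-equivariant group isomorphism from N/N′ (with the G-action induced by conjugation) onto Z_1(G), the first homology group of the Cayley graph of G. -/
/-- `C1 G d` : edge chains of the right Cayley graph of `G` w.r.t. `d` distinguished
elements; `Finsupp.single (g, i) 1` is the edge from `g` to `g * x i`. -/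
abbrev C1 (G : Type*) (d : ℕ) : Type _ := (G × Fin d) →₀ ℤ

/-- `C0 G` : vertex chains, the free abelian group on `G`. -/
abbrev C0 (G : Type*) : Type _ := G →₀ ℤ

/-- The left action of `g : G` on edge chains, `g • δ_{(h,i)} = δ_{(g*h,i)}`. -/
noncomputable def shift {G : Type*} [Group G] (d : ℕ) (g : G) : C1 G d →+ C1 G d :=
  Finsupp.mapDomain.addMonoidHom fun p => (g * p.1, p.2)

/-- The boundary map `∂ : C1 → C0`, `∂ δ_{(g,i)} = δ_{g * x i} - δ_g`. -/
noncomputable def bd {G : Type*} [Group G] (d : ℕ) (x : Fin d → G) : C1 G d →+ C0 G :=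
  Finsupp.liftAddHom fun p =>
    zmultiplesHom (C0 G) (Finsupp.single (p.1 * x p.2) 1 - Finsupp.single p.1 1)

section Aux

variable {d : ℕ} {G : Type*} [Group G]

lemma shift_single (g h : G) (i : Fin d) (n : ℤ) :
    shift d g (Finsupp.single (h, i) n) = Finsupp.single (g * h, i) n := by
  simp [shift, Finsupp.mapDomain.addMonoidHom, Finsupp.mapDomain_single]

lemma shift_one_apply (γ : C1 G d) : shift d (1 : G) γ = γ := by
  have : shift d (1 : G) = AddMonoidHom.id (C1 G d) := by
    apply Finsupp.addHom_ext
    rintro ⟨h, i⟩ n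
    simp [shift_single]
  rw [this]; rfl

lemma shift_shift (g h : G) (γ : C1 G d) :
    shift d g (shift d h γ) = shift d (g * h) γ := by
  have : (shift d g).comp (shift d h) = shift d (g * h) := by
    apply Finsupp.addHom_ext
    rintro ⟨k, i⟩ n
    simp [shift_single, mul_assoc]
  calc shift d g (shift d h γ) = ((shift d g).comp (shift d h)) γ := rfl
    _ = shift d (g * h) γ := by rw [this]

lemma bd_single (x : Fin d → G) (p : G × Fin d) (n : ℤ) :
    bd d x (Finsupp.single p n)
      = n • (Finsupp.single (p.1 * x p.2) 1 - Finsupp.single p.1 1) := by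
  simp [bd]

/-- the shift action on vertex chains. -/
noncomputable def shift0 {G : Type*} [Group G] (g : G) : C0 G →+ C0 G :=
  Finsupp.mapDomain.addMonoidHom fun h => g * h

lemma shift0_single (g h : G) (n : ℤ) :
    shift0 g (Finsupp.single h n) = Finsupp.single (g * h) n := by
  simp [shift0, Finsupp.mapDomain.addMonoidHom, Finsupp.mapDomain_single]

open scoped Classical in
/-- a section of `lift x` sending `1` to `1`. -/
noncomputable def sec (x : Fin d → G) (hgen : Function.Surjective (FreeGroup.lift x))
    (g : G) : FreeGroup (Fin d) :=
  if g = 1 then 1 else (hgen g).choose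

lemma sec_spec (x : Fin d → G) (hgen : Function.Surjective (FreeGroup.lift x)) (g : G) :
    FreeGroup.lift x (sec x hgen g) = g := by
  rw [sec]
  split
  · simp [*]
  · exact (hgen g).choose_spec

lemma sec_one (x : Fin d → G) (hgen : Function.Surjective (FreeGroup.lift x)) :
    sec x hgen 1 = 1 := by rw [sec]; simp

variable (x : Fin d → G) (D : FreeGroup (Fin d) → C1 G d)
  (hDmul : ∀ u v : FreeGroup (Fin d),
      D (u * v) = D u + shift d (FreeGroup.lift x u) (D v))

include hDmul

lemma D_one : D 1 = 0 := by
  have h := hDmul 1 1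
  rw [mul_one, map_one, shift_one_apply] at h
  exact (left_eq_add.mp h)

lemma D_inv (u : FreeGroup (Fin d)) :
    D u⁻¹ = - shift d (FreeGroup.lift x u)⁻¹ (D u) := by
  have h := hDmul u⁻¹ u
  rw [inv_mul_cancel, D_one x D hDmul] at h
  have h2 : shift d (FreeGroup.lift x u⁻¹) (D u) = - D u⁻¹ := by
    rw [eq_neg_iff_add_eq_zero, add_comm]; exact h.symm
  rw [map_inv] at h2
  rw [← neg_neg (D u⁻¹), ← h2]

variable (hD1 : ∀ i : Fin d, D (FreeGroup.of i) = Finsupp.single ((1 : G), i) 1)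

include hD1

lemma bd_D (w : FreeGroup (Fin d)) :
    bd d x (D w) = Finsupp.single (FreeGroup.lift x w) 1 - Finsupp.single (1 : G) 1 := by
  have hshift : ∀ (g : G) (γ : C1 G d),
      bd d x (shift d g γ) = shift0 g (bd d x γ) := by
    intro g γ
    have : (bd d x).comp (shift d g) = (shift0 g).comp (bd d x) := by
      apply Finsupp.addHom_ext
      rintro ⟨h, i⟩ n
      rw [AddMonoidHom.comp_apply, AddMonoidHom.comp_apply, shift_single, bd_single,
        bd_single, map_zsmul, map_sub, shift0_single, shift0_single, mul_assoc]
    calc bd d x (shift d g γ) = ((bd d x).comp (shift d g)) γ := rfl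
      _ = shift0 g (bd d x γ) := by rw [this]; rfl
  induction w using FreeGroup.induction_on with
  | C1 => simp [D_one x D hDmul]
  | of i =>
      have : D (FreeGroup.of i) = Finsupp.single ((1 : G), i) 1 := hD1 i
      rw [this]
      simp [bd_single]
  | inv_of i ih =>
      have h := D_inv x D hDmul (FreeGroup.of i)
      rw [h, map_neg, hshift, ih, map_sub, shift0_single, shift0_single, map_inv]
      simp
  | mul u v ihu ihv =>
      rw [hDmul, map_add, hshift, ihu, ihv, map_sub, shift0_single, shift0_single, map_mul]
      simp

variable (hgen : Function.Surjective (FreeGroup.lift x))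

/-- the standard loop at edge `p`. -/
noncomputable def ae (p : G × Fin d) : FreeGroup (Fin d) :=
  sec x hgen p.1 * FreeGroup.of p.2 * (sec x hgen (p.1 * x p.2))⁻¹

omit hDmul hD1 in
lemma ae_mem (p : G × Fin d) : ae x hgen p ∈ (FreeGroup.lift x).ker := by
  rw [MonoidHom.mem_ker, ae, map_mul, map_mul, map_inv, sec_spec, sec_spec,
    FreeGroup.lift_apply_of, mul_inv_cancel]

include hD1 in
lemma D_ae (p : G × Fin d) :
    D (ae x hgen p) = Finsupp.single p 1 + D (sec x hgen p.1)
      - D (sec x hgen (p.1 * x p.2)) := by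
  obtain ⟨g, i⟩ := p
  rw [ae, mul_assoc, hDmul, hDmul, hD1, D_inv x D hDmul, sec_spec, sec_spec,
    FreeGroup.lift_apply_of, map_add, map_neg, map_neg, shift_shift, shift_shift,
    shift_single, mul_inv_cancel, shift_one_apply, mul_one]
  abel

include hD1 hgen in
lemma D_surj (γ : C1 G d) (hγ : bd d x γ = 0) :
    ∃ a ∈ (FreeGroup.lift x).ker, D a = γ := by
  classical
  set S : AddSubgroup (C1 G d) :=
    { carrier := {c | ∃ a ∈ (FreeGroup.lift x).ker, D a = c}
      zero_mem' := ⟨1, one_mem _, D_one x D hDmul⟩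
      add_mem' := by
        rintro c c' ⟨a, ha, rfl⟩ ⟨b, hb, rfl⟩
        refine ⟨a * b, mul_mem ha hb, ?_⟩
        rw [hDmul, MonoidHom.mem_ker.mp ha, shift_one_apply]
      neg_mem' := by
        rintro c ⟨a, ha, rfl⟩
        refine ⟨a⁻¹, inv_mem ha, ?_⟩
        rw [D_inv x D hDmul, MonoidHom.mem_ker.mp ha, inv_one, shift_one_apply] } with hS
  let K1 : C1 G d →+ C1 G d :=
    Finsupp.liftAddHom fun p => zmultiplesHom (C1 G d) (D (ae x hgen p))
  let M : C0 G →+ C1 G d :=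
    Finsupp.liftAddHom fun g => zmultiplesHom (C1 G d) (D (sec x hgen g))
  have hK : K1 = AddMonoidHom.id (C1 G d) - M.comp (bd d x) := by
    apply Finsupp.addHom_ext
    rintro p n
    rw [AddMonoidHom.sub_apply, AddMonoidHom.comp_apply, AddMonoidHom.id_apply,
      Finsupp.liftAddHom_apply_single, zmultiplesHom_apply, bd_single, map_zsmul,
      map_sub, Finsupp.liftAddHom_apply_single, Finsupp.liftAddHom_apply_single,
      zmultiplesHom_apply, zmultiplesHom_apply, D_ae x D hDmul hD1 hgen]
    simp only [one_smul, smul_add, smul_sub, Finsupp.smul_single, smul_eq_mul, mul_one]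
    abel
  have h1 : K1 γ = γ := by
    rw [hK, AddMonoidHom.sub_apply, AddMonoidHom.comp_apply, hγ, map_zero,
      AddMonoidHom.id_apply, sub_zero]
  have h2 : K1 γ ∈ S := by
    rw [Finsupp.liftAddHom_apply]
    apply AddSubgroup.sum_mem
    intro p _
    simp only [zmultiplesHom_apply]
    exact AddSubgroup.zsmul_mem S ⟨ae x hgen p, ae_mem x hgen p, rfl⟩ _
  rw [h1] at h2
  exact h2

include hD1 hgen in
lemma D_ker_sub (a : FreeGroup (Fin d)) (ha : a ∈ (FreeGroup.lift x).ker) (h0 : D a = 0) :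
    a ∈ (⁅(FreeGroup.lift x).ker, (FreeGroup.lift x).ker⁆ :
      Subgroup (FreeGroup (Fin d))) := by
  classical
  set N : Subgroup (FreeGroup (Fin d)) := (FreeGroup.lift x).ker with hN
  set N' : Subgroup (FreeGroup (Fin d)) := ⁅N, N⁆ with hN'
  haveI hnorm : N'.Normal := Subgroup.commutator_normal N N
  set π : FreeGroup (Fin d) →* FreeGroup (Fin d) ⧸ N' := QuotientGroup.mk' N' with hπ
  have comm : ∀ u ∈ N, ∀ v ∈ N, π u * π v = π v * π u := by
    intro u hu v hv
    rw [← map_mul, ← map_mul]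
    refine (QuotientGroup.mk'_eq_mk' N').mpr
      (open scoped commutatorElement in
        ⟨⁅v⁻¹, u⁻¹⁆, Subgroup.commutator_mem_commutator (inv_mem hv) (inv_mem hu), ?_⟩)
    simp [commutatorElement_def, mul_assoc]
  set Nc : Subgroup (FreeGroup (Fin d) ⧸ N') := N.map π with hNc
  have hmem : ∀ p : G × Fin d, π (ae x hgen p) ∈ Nc :=
    fun p => ⟨ae x hgen p, ae_mem x hgen p, rfl⟩
  letI : CommGroup Nc :=
    { (inferInstance : Group Nc) with
      mul_comm := by
        rintro ⟨_, u, hu, rfl⟩ ⟨_, v, hv, rfl⟩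
        exact Subtype.ext (comm u hu v hv) }
  set Ψ : C1 G d →+ Additive Nc :=
    Finsupp.liftAddHom fun p => zmultiplesHom (Additive Nc)
      (Additive.ofMul (⟨π (ae x hgen p), hmem p⟩ : Nc)) with hΨ
  have hΨsingle : ∀ p : G × Fin d,
      ((Additive.toMul (Ψ (Finsupp.single p 1)) : Nc) : FreeGroup (Fin d) ⧸ N')
        = π (ae x hgen p) := by
    intro p
    rw [hΨ, Finsupp.liftAddHom_apply_single, zmultiplesHom_apply, one_smul]
    rfl
  have key : ∀ v : FreeGroup (Fin d), ∀ g : G,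
      ((Additive.toMul (Ψ (shift d g (D v))) : Nc) : FreeGroup (Fin d) ⧸ N')
        = π (sec x hgen g * v * (sec x hgen (g * FreeGroup.lift x v))⁻¹) := by
    intro v
    induction v using FreeGroup.induction_on with
    | C1 =>
        intro g
        rw [D_one x D hDmul, map_zero, map_zero, toMul_zero]
        simp
    | of i =>
        intro g
        rw [hD1 i, shift_single, mul_one, hΨsingle, ae, FreeGroup.lift_apply_of]
    | inv_of i _ =>
        intro g
        have hinv : D (FreeGroup.of i)⁻¹
            = -(Finsupp.single (((x i)⁻¹ : G), i) (1 : ℤ)) := by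
          rw [D_inv x D hDmul, hD1 i, FreeGroup.lift_apply_of, shift_single, mul_one]
        rw [hinv, map_neg, map_neg, toMul_neg]
        simp only [InvMemClass.coe_inv]
        rw [shift_single, hΨsingle, ← map_inv, ae, map_inv (FreeGroup.lift x),
          FreeGroup.lift_apply_of, inv_mul_cancel_right]
        congr 1
        group
    | mul u v ihu ihv =>
        intro g
        rw [hDmul, map_add, map_add, toMul_add, Subgroup.coe_mul, shift_shift, ihu g,
          ihv (g * FreeGroup.lift x u), ← map_mul, map_mul (FreeGroup.lift x),
          ← mul_assoc g]
        congr 1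
        group
  have h := key a 1
  rw [h0, map_zero, map_zero, toMul_zero, MonoidHom.mem_ker.mp ha, one_mul, sec_one,
    one_mul, inv_one, mul_one] at h
  have h1 : π a = 1 := by rw [← h]; simp
  rwa [hπ, QuotientGroup.mk'_apply, QuotientGroup.eq_one_iff] at h1

omit hD1 in
lemma D_comm_zero :
    ∀ a ∈ (⁅(FreeGroup.lift x).ker, (FreeGroup.lift x).ker⁆ :
      Subgroup (FreeGroup (Fin d))), D a = 0 := by
  have hmulk : ∀ u v : FreeGroup (Fin d), u ∈ (FreeGroup.lift x).ker →
      D (u * v) = D u + D v := fun u v hu => by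
    rw [hDmul, MonoidHom.mem_ker.mp hu, shift_one_apply]
  have hinvk : ∀ u ∈ (FreeGroup.lift x).ker, D u⁻¹ = - D u := fun u hu => by
    rw [D_inv x D hDmul, MonoidHom.mem_ker.mp hu, inv_one, shift_one_apply]
  set L : Subgroup (FreeGroup (Fin d)) :=
    { carrier := {a | a ∈ (FreeGroup.lift x).ker ∧ D a = 0}
      one_mem' := ⟨one_mem _, D_one x D hDmul⟩
      mul_mem' := by
        rintro a b ⟨ha, hDa⟩ ⟨hb, hDb⟩
        exact ⟨mul_mem ha hb, by rw [hmulk a b ha, hDa, hDb, add_zero]⟩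
      inv_mem' := by
        rintro a ⟨ha, hDa⟩
        exact ⟨inv_mem ha, by rw [hinvk a ha, hDa, neg_zero]⟩ } with hL
  have hle : (⁅(FreeGroup.lift x).ker, (FreeGroup.lift x).ker⁆ :
      Subgroup (FreeGroup (Fin d))) ≤ L := by
    rw [Subgroup.commutator_le]
    intro g1 h1 g2 h2
    constructor
    · rw [commutatorElement_def]
      exact mul_mem (mul_mem (mul_mem h1 h2) (inv_mem h1)) (inv_mem h2)
    · rw [commutatorElement_def, hmulk _ _ (mul_mem (mul_mem h1 h2) (inv_mem h1)),
        hmulk _ _ (mul_mem h1 h2), hmulk _ _ h1, hinvk _ h1, hinvk _ h2]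
      abel
  exact fun a ha => ((hle ha).2)

end Aux

/-- Let `N = ker φ` and `N' = [N, N]`.  The restriction of `D` to `N` is a group
homomorphism onto the cycle group `Z_1 = ker ∂` with kernel exactly `N'`, and
`D (w a w⁻¹) = φ(w) · D a` for `w ∈ F_d`, `a ∈ N`; hence `D` induces a `G`-equivariant
isomorphism `N/N' ≃ Z_1(G)`, the first homology group of the Cayley graph of `G`. -/
theorem D_iso_homology {d : ℕ} (hd : 1 ≤ d) {G : Type*} [Group G] (x : Fin d → G)
    (hgen : Function.Surjective (FreeGroup.lift x))
    (D : FreeGroup (Fin d) → C1 G d)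
    (hD1 : ∀ i : Fin d, D (FreeGroup.of i) = Finsupp.single ((1 : G), i) 1)
    (hDmul : ∀ u v : FreeGroup (Fin d),
      D (u * v) = D u + shift d (FreeGroup.lift x u) (D v)) :
    (∀ a ∈ (FreeGroup.lift x).ker, D a ∈ (bd d x).ker) ∧
    (∀ a b : FreeGroup (Fin d), a ∈ (FreeGroup.lift x).ker → b ∈ (FreeGroup.lift x).ker →
      D (a * b) = D a + D b) ∧
    (∀ γ : C1 G d, γ ∈ (bd d x).ker → ∃ a ∈ (FreeGroup.lift x).ker, D a = γ) ∧
    (∀ a ∈ (FreeGroup.lift x).ker,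
      (D a = 0 ↔ a ∈ (⁅(FreeGroup.lift x).ker, (FreeGroup.lift x).ker⁆ :
        Subgroup (FreeGroup (Fin d))))) ∧
    (∀ (w : FreeGroup (Fin d)), ∀ a ∈ (FreeGroup.lift x).ker,
      D (w * a * w⁻¹) = shift d (FreeGroup.lift x w) (D a)) := by
  refine ⟨?_, ?_, ?_, ?_, ?_⟩
  · intro a ha
    rw [AddMonoidHom.mem_ker, bd_D x D hDmul hD1, MonoidHom.mem_ker.mp ha, sub_self]
  · intro a b ha hb
    rw [hDmul, MonoidHom.mem_ker.mp ha, shift_one_apply]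
  · intro γ hγ
    exact D_surj x D hDmul hD1 hgen γ (AddMonoidHom.mem_ker.mp hγ)
  · intro a ha
    exact ⟨D_ker_sub x D hDmul hD1 hgen a ha, D_comm_zero x D hDmul a⟩
  · intro w a ha
    rw [hDmul (w * a) w⁻¹, hDmul w a, D_inv x D hDmul w, map_mul,
      MonoidHom.mem_ker.mp ha, mul_one, map_neg, shift_shift, mul_inv_cancel,
      shift_one_apply]
    abel
end

section
/- With G = ℤ^d and φ: F_d → ℤ^d the abelianization, the map D induces a ℤ^d-equivariant group isomorphism from F_d′/F_d″ (where F_d′ is the commutator subgroup and F_d″ its commutator subgroup, with the ℤ^d-action induced by conjugation) onto Z_1(ℤ^d) = H_1(E^d), which sends, for each m ∈ ℤ^d and 1 ≤ i < j ≤ d, the class of the element X^m [X_i, X_j] X^{−m} (where X^m = X_1^{m_1} X_2^{m_2} ⋯ X_d^{m_d}) to the plaquette p(m,i,j). In particular the free metabelian group Met(d) = F_d/F_d″ is an extension of ℤ^d by the homology group H_1(E^d) of the lattice. -/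
/-- The lattice `ℤ^d`. -/
abbrev Zd (d : ℕ) : Type := Fin d → ℤ

/-- Edge chains of the grid complex `E^d` (Cayley graph of `ℤ^d`):
`Finsupp.single (m, i) 1` is the edge from `m` to `m + e i`. -/
abbrev C1Z (d : ℕ) : Type := (Zd d × Fin d) →₀ ℤ

/-- Vertex chains: the free abelian group on `ℤ^d`. -/
abbrev C0Z (d : ℕ) : Type := Zd d →₀ ℤ

/-- Translation action of `v ∈ ℤ^d` on edge chains: `v • δ_{(m,i)} = δ_{(m+v,i)}`. -/
noncomputable def shiftZ (d : ℕ) (v : Zd d) : C1Z d →+ C1Z d :=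
  Finsupp.mapDomain.addMonoidHom fun p => (v + p.1, p.2)

/-- The boundary map `∂ δ_{(m,i)} = δ_{m + e i} - δ_m`; its kernel is the cycle group
`Z_1(ℤ^d) = H_1(E^d)`. -/
noncomputable def bdZ (d : ℕ) : C1Z d →+ C0Z d :=
  Finsupp.liftAddHom fun p =>
    zmultiplesHom (C0Z d)
      (Finsupp.single (p.1 + Pi.single p.2 1) 1 - Finsupp.single p.1 1)

/-- The abelianization homomorphism `φ : F_d → ℤ^d`. -/
def phiZ (d : ℕ) : FreeGroup (Fin d) →* Multiplicative (Zd d) :=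
  FreeGroup.lift fun i => Multiplicative.ofAdd (Pi.single i 1)

/-- The plaquette `p(m,i,j) = δ_{(m,i)} + δ_{(m+e_i,j)} - δ_{(m+e_j,i)} - δ_{(m,j)}`. -/
noncomputable def plaq (d : ℕ) (m : Zd d) (i j : Fin d) : C1Z d :=
  Finsupp.single (m, i) 1 + Finsupp.single (m + Pi.single i 1, j) 1
    - Finsupp.single (m + Pi.single j 1, i) 1 - Finsupp.single (m, j) 1

/-- `X^m = X_1^{m_1} X_2^{m_2} ⋯ X_d^{m_d}` in the free group. -/
def Xm (d : ℕ) (m : Zd d) : FreeGroup (Fin d) :=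
  ((List.finRange d).map fun i => FreeGroup.of i ^ m i).prod

open scoped commutatorElement

namespace MH

variable {d : ℕ}

lemma shiftZ_single (v : Zd d) (p : Zd d × Fin d) (k : ℤ) :
    shiftZ d v (Finsupp.single p k) = Finsupp.single (v + p.1, p.2) k := by
  simp [shiftZ, Finsupp.mapDomain_single]

lemma shiftZ_zero (γ : C1Z d) : shiftZ d 0 γ = γ := by
  have : shiftZ d 0 = AddMonoidHom.id (C1Z d) := by
    apply Finsupp.addHom_ext
    intro p k
    simp [shiftZ_single]
  rw [this]; rfl

lemma shiftZ_shiftZ (v w : Zd d) (γ : C1Z d) :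
    shiftZ d v (shiftZ d w γ) = shiftZ d (v + w) γ := by
  have : (shiftZ d v).comp (shiftZ d w) = shiftZ d (v + w) := by
    apply Finsupp.addHom_ext
    intro p k
    simp [shiftZ_single, add_assoc]
  exact DFunLike.congr_fun this γ

lemma bdZ_single (p : Zd d × Fin d) (k : ℤ) :
    bdZ d (Finsupp.single p k) =
      k • (Finsupp.single (p.1 + Pi.single p.2 1) 1 - Finsupp.single p.1 1) := by
  simp [bdZ, Finsupp.liftAddHom_apply_single]

noncomputable def shift0 (v : Zd d) : C0Z d →+ C0Z d :=
  Finsupp.mapDomain.addMonoidHom fun m => v + m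

lemma shift0_single (v m : Zd d) (k : ℤ) :
    shift0 v (Finsupp.single m k) = Finsupp.single (v + m) k := by
  simp [shift0, Finsupp.mapDomain_single]

lemma bdZ_shiftZ (v : Zd d) (γ : C1Z d) :
    bdZ d (shiftZ d v γ) = shift0 v (bdZ d γ) := by
  have : (bdZ d).comp (shiftZ d v) = (shift0 v).comp (bdZ d) := by
    apply Finsupp.addHom_ext
    intro p k
    simp only [AddMonoidHom.coe_comp, Function.comp_apply, shiftZ_single, bdZ_single]
    rw [map_zsmul]
    simp [shift0_single, add_assoc]
  exact DFunLike.congr_fun this γ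

lemma phiZ_of (i : Fin d) : phiZ d (FreeGroup.of i) = Multiplicative.ofAdd (Pi.single i 1) := by
  simp [phiZ]

lemma sum_single_eq (v : Zd d) : ∑ i, Pi.single i (v i) = v := by
  funext j
  rw [Finset.sum_apply]
  simp [Pi.single_apply]

lemma phiZ_Xm (v : Zd d) : phiZ d (Xm d v) = Multiplicative.ofAdd v := by
  rw [Xm, map_list_prod, List.map_map]
  have h1 : ((List.finRange d).map ((phiZ d) ∘ fun i => FreeGroup.of i ^ v i)).prod
      = ∏ i, (phiZ d) (FreeGroup.of i ^ v i) := (Fin.prod_univ_def _).symm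
  rw [h1]
  have h2 : ∀ i : Fin d, phiZ d (FreeGroup.of i ^ v i)
      = Multiplicative.ofAdd (Pi.single i (v i)) := by
    intro i
    rw [map_zpow, phiZ_of]
    rw [← ofAdd_zsmul]
    congr 1
    ext j
    simp [Pi.single_apply]
  simp_rw [h2]
  rw [← ofAdd_sum, sum_single_eq]

lemma Xm_zero : Xm d (0 : Zd d) = 1 := by
  rw [Xm]
  apply List.prod_eq_one
  intro x hx
  simp at hx
  obtain ⟨i, _, rfl⟩ := hx
  simp

end MH

namespace MH2
open MH
variable {d : ℕ}

lemma abXm (v : Zd d) :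
    Abelianization.of (Xm d v) = ∏ i, (Abelianization.of (G := FreeGroup (Fin d)) (FreeGroup.of i)) ^ (v i) := by
  rw [Xm, map_list_prod, List.map_map]
  rw [show ((List.finRange d).map (⇑Abelianization.of ∘ fun i => FreeGroup.of i ^ v i)).prod
      = ∏ i, Abelianization.of (FreeGroup.of i ^ v i) from (Fin.prod_univ_def _).symm]
  simp [map_zpow]

lemma comm_eq_ker : commutator (FreeGroup (Fin d)) = (phiZ d).ker := by
  apply le_antisymm
  · exact Abelianization.commutator_subset_ker (phiZ d)
  · intro a ha
    rw [MonoidHom.mem_ker] at ha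
    have key : ∀ b : FreeGroup (Fin d),
        Abelianization.of (Xm d (Multiplicative.toAdd (phiZ d b))) = Abelianization.of b := by
      have hpure : ∀ i : Fin d, (pure i : FreeGroup (Fin d)) = FreeGroup.of i := fun _ => rfl
      intro b
      induction b using FreeGroup.induction_on with
      | C1 => simp [Xm_zero]
      | of i =>
        rw [phiZ_of, abXm]
        rw [Finset.prod_eq_single i (fun j _ hj => by simp [Pi.single_apply, hj]) (by simp)]
        simp
      | inv_of i ih =>
        have h1 : Multiplicative.toAdd ((phiZ d) (FreeGroup.of i)⁻¹)
            = - Multiplicative.toAdd ((phiZ d) (FreeGroup.of i)) := by rw [map_inv]; rfl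
        rw [h1, show Abelianization.of ((FreeGroup.of i)⁻¹)
            = (Abelianization.of (FreeGroup.of i))⁻¹ from map_inv _ _, ← ih, abXm, abXm]
        rw [← Finset.prod_inv_distrib]
        congr 1
        funext j
        simp [← zpow_neg]
      | mul x y ihx ihy =>
        have h2 : Multiplicative.toAdd ((phiZ d) (x * y))
            = Multiplicative.toAdd ((phiZ d) x) + Multiplicative.toAdd ((phiZ d) y) := by
          rw [map_mul]; rfl
        rw [h2, map_mul Abelianization.of x y, ← ihx, ← ihy, abXm, abXm, abXm]
        rw [← Finset.prod_mul_distrib]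
        congr 1
        funext i
        simp [zpow_add]
    have := key a
    rw [ha] at this
    simp only [toAdd_one] at this
    rw [Xm_zero, map_one] at this
    have h1 : (QuotientGroup.mk a : FreeGroup (Fin d) ⧸ commutator (FreeGroup (Fin d))) = 1 := this.symm
    rwa [QuotientGroup.eq_one_iff] at h1

lemma mem_comm_iff (a : FreeGroup (Fin d)) :
    a ∈ commutator (FreeGroup (Fin d)) ↔ phiZ d a = 1 := by
  rw [comm_eq_ker]; rfl

end MH2

namespace MH3
open MH MH2
variable {d : ℕ} (D : FreeGroup (Fin d) → C1Z d)
  (hD1 : ∀ i : Fin d, D (FreeGroup.of i) = Finsupp.single ((0 : Zd d), i) 1)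
  (hDmul : ∀ u v : FreeGroup (Fin d),
    D (u * v) = D u + shiftZ d (Multiplicative.toAdd (phiZ d u)) (D v))

include hDmul

lemma D_one : D 1 = 0 := by
  have h := hDmul 1 1
  rw [mul_one, map_one] at h
  rw [show Multiplicative.toAdd (1 : Multiplicative (Zd d)) = 0 from rfl, shiftZ_zero] at h
  nth_rewrite 1 [← add_zero (D 1)] at h
  exact (add_left_cancel h).symm

lemma D_inv' (u : FreeGroup (Fin d)) :
    shiftZ d (Multiplicative.toAdd (phiZ d u)) (D u⁻¹) = - D u := by
  have h := hDmul u u⁻¹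
  rw [mul_inv_cancel, D_one D hDmul] at h
  linear_combination (norm := abel) -h

lemma D_inv (u : FreeGroup (Fin d)) :
    D u⁻¹ = - shiftZ d (-(Multiplicative.toAdd (phiZ d u))) (D u) := by
  have h := D_inv' D hDmul u
  have h2 := congrArg (shiftZ d (-(Multiplicative.toAdd (phiZ d u)))) h
  rw [shiftZ_shiftZ, neg_add_cancel, shiftZ_zero, map_neg] at h2
  exact h2

lemma D_comm_mul {a : FreeGroup (Fin d)} (b : FreeGroup (Fin d))
    (ha : a ∈ commutator (FreeGroup (Fin d))) : D (a * b) = D a + D b := by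
  rw [hDmul, (mem_comm_iff a).mp ha,
    show Multiplicative.toAdd (1 : Multiplicative (Zd d)) = 0 from rfl, shiftZ_zero]

lemma D_comm_inv {a : FreeGroup (Fin d)} (ha : a ∈ commutator (FreeGroup (Fin d))) :
    D a⁻¹ = - D a := by
  rw [D_inv D hDmul, (mem_comm_iff a).mp ha,
    show Multiplicative.toAdd (1 : Multiplicative (Zd d)) = 0 from rfl, neg_zero, shiftZ_zero]

lemma D_conj (w : FreeGroup (Fin d)) {a : FreeGroup (Fin d)}
    (ha : a ∈ commutator (FreeGroup (Fin d))) :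
    D (w * a * w⁻¹) = shiftZ d (Multiplicative.toAdd (phiZ d w)) (D a) := by
  rw [hDmul (w * a) w⁻¹, hDmul w a,
    show phiZ d (w * a) = phiZ d w * phiZ d a from map_mul _ _ _,
    (mem_comm_iff a).mp ha, mul_one, D_inv' D hDmul]
  abel

include hD1

lemma D_of_inv (i : Fin d) :
    D (FreeGroup.of i)⁻¹ = - Finsupp.single ((-(Pi.single i 1) : Zd d), i) 1 := by
  rw [D_inv D hDmul, hD1, phiZ_of, toAdd_ofAdd, shiftZ_single, add_zero]

lemma D_bd (u : FreeGroup (Fin d)) :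
    bdZ d (D u) = Finsupp.single (Multiplicative.toAdd (phiZ d u)) 1
      - Finsupp.single (0 : Zd d) 1 := by
  have hpure : ∀ i : Fin d, (pure i : FreeGroup (Fin d)) = FreeGroup.of i := fun _ => rfl
  induction u using FreeGroup.induction_on with
  | C1 =>
    rw [D_one D hDmul, map_zero, map_one,
      show Multiplicative.toAdd (1 : Multiplicative (Zd d)) = 0 from rfl, sub_self]
  | of i =>
    rw [hD1, phiZ_of, toAdd_ofAdd, bdZ_single, one_smul, zero_add]
  | inv_of i _ =>
    rw [D_of_inv D hD1 hDmul, map_neg, bdZ_single, one_smul, map_inv, phiZ_of]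
    rw [show Multiplicative.toAdd ((Multiplicative.ofAdd (Pi.single i (1:ℤ)))⁻¹)
        = -(Pi.single i 1 : Zd d) from rfl]
    rw [neg_add_cancel, neg_sub]
  | mul x y ihx ihy =>
    rw [hDmul, map_add, bdZ_shiftZ, ihx, ihy, map_sub, shift0_single, shift0_single,
      show phiZ d (x * y) = phiZ d x * phiZ d y from map_mul _ _ _,
      show Multiplicative.toAdd (phiZ d x * phiZ d y)
        = Multiplicative.toAdd (phiZ d x) + Multiplicative.toAdd (phiZ d y) from rfl, add_zero]
    abel

end MH3

namespace MH4
open MH MH2 MH3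

variable {d : ℕ}

abbrev Fd (d : ℕ) := FreeGroup (Fin d)

abbrev Fpp (d : ℕ) : Subgroup (Fd d) := ⁅commutator (Fd d), commutator (Fd d)⁆

abbrev QQ (d : ℕ) := Fd d ⧸ Fpp d

abbrev mkQ (d : ℕ) : Fd d →* QQ d := QuotientGroup.mk' (Fpp d)

lemma commQ {a b : Fd d} (ha : a ∈ commutator (Fd d)) (hb : b ∈ commutator (Fd d)) :
    Commute (mkQ d a) (mkQ d b) := by
  rw [← commutatorElement_eq_one_iff_commute, ← map_commutatorElement]
  exact (QuotientGroup.eq_one_iff _).mpr (Subgroup.commutator_mem_commutator ha hb)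

abbrev AA (d : ℕ) : Subgroup (QQ d) := Subgroup.map (mkQ d) (commutator (Fd d))

instance : (AA d).Normal :=
  Subgroup.Normal.map inferInstance _ (QuotientGroup.mk'_surjective _)

noncomputable instance : CommGroup (AA d) :=
  { (inferInstance : Group (AA d)) with
    mul_comm := by
      rintro ⟨x, a, ha, rfl⟩ ⟨y, b, hb, rfl⟩
      exact Subtype.ext (commQ ha hb) }

def wgen (p : Zd d × Fin d) : Fd d :=
  Xm d p.1 * FreeGroup.of p.2 * (Xm d (p.1 + Pi.single p.2 1))⁻¹

lemma wgen_mem (p : Zd d × Fin d) : wgen p ∈ commutator (Fd d) := by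
  rw [mem_comm_iff, wgen, map_mul, map_mul, map_inv, phiZ_Xm, phiZ_Xm, phiZ_of]
  rw [← ofAdd_add, mul_inv_cancel]

lemma wgenQ_mem (p : Zd d × Fin d) : mkQ d (wgen p) ∈ AA d :=
  ⟨wgen p, wgen_mem p, rfl⟩

def xQ (v : Zd d) : QQ d := mkQ d (Xm d v)

lemma xQ_zero : xQ (0 : Zd d) = 1 := by rw [xQ, Xm_zero, map_one]

def tg (v m : Zd d) : Fd d := (Xm d (v + m))⁻¹ * Xm d v * Xm d m

lemma tg_mem (v m : Zd d) : tg v m ∈ commutator (Fd d) := by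
  rw [mem_comm_iff, tg, map_mul, map_mul, map_inv, phiZ_Xm, phiZ_Xm, phiZ_Xm]
  rw [mul_assoc, ← ofAdd_add, inv_mul_cancel]

noncomputable def cA : C1Z d →+ Additive (AA d) :=
  Finsupp.liftAddHom fun p =>
    zmultiplesHom (Additive (AA d)) (Additive.ofMul (⟨mkQ d (wgen p), wgenQ_mem p⟩ : AA d))

noncomputable def cc (γ : C1Z d) : QQ d := ((Additive.toMul (cA γ) : AA d) : QQ d)

lemma cc_mem (γ : C1Z d) : cc γ ∈ AA d := (Additive.toMul (cA γ)).2

lemma cc_add (γ γ' : C1Z d) : cc (γ + γ') = cc γ * cc γ' := by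
  unfold cc; rw [map_add]; rfl

lemma cc_zero : cc (0 : C1Z d) = 1 := by
  unfold cc; rw [map_zero]; rfl

lemma cc_neg (γ : C1Z d) : cc (-γ) = (cc γ)⁻¹ := by
  unfold cc; rw [map_neg]; rfl

lemma cc_single (p : Zd d × Fin d) : cc (Finsupp.single p 1) = mkQ d (wgen p) := by
  unfold cc cA
  rw [Finsupp.liftAddHom_apply_single]
  show (((1 : ℤ) • Additive.ofMul _).toMul : AA d).val = _
  rw [one_smul]
  rfl

def uQ (v m : Zd d) : QQ d := xQ (v + m) * mkQ d (tg v m) * (xQ (v + m))⁻¹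

lemma uQ_mem (v m : Zd d) : uQ v m ∈ AA d :=
  (inferInstance : (AA d).Normal).conj_mem _ ⟨tg v m, tg_mem v m, rfl⟩ _

lemma uQ_zero (v : Zd d) : uQ v 0 = 1 := by
  have : tg v 0 = 1 := by rw [tg, add_zero, Xm_zero]; group
  rw [uQ, this, map_one, mul_one, mul_inv_cancel]

noncomputable def UA (v : Zd d) : C0Z d →+ Additive (AA d) :=
  Finsupp.liftAddHom fun m =>
    zmultiplesHom (Additive (AA d)) (Additive.ofMul (⟨uQ v m, uQ_mem v m⟩ : AA d))

lemma UA_single (v m : Zd d) : ((Additive.toMul (UA v (Finsupp.single m 1)) : AA d) : QQ d) = uQ v m := by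
  unfold UA
  rw [Finsupp.liftAddHom_apply_single]
  show (((1 : ℤ) • Additive.ofMul _).toMul : AA d).val = _
  rw [one_smul]
  rfl

/-- Conjugation by `xQ v` as a monoid hom of `AA d`. -/
def conjA (v : Zd d) : AA d →* AA d where
  toFun a := ⟨xQ v * (a : QQ d) * (xQ v)⁻¹,
    (inferInstance : (AA d).Normal).conj_mem _ a.2 _⟩
  map_one' := by ext; simp
  map_mul' a b := by ext; push_cast; group


lemma uQ_eq_mk (v m : Zd d) :
    uQ v m = mkQ d (Xm d (v + m) * tg v m * (Xm d (v + m))⁻¹) := by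
  rw [uQ, xQ, map_mul, map_mul, map_inv]

lemma u_elt_mem (v m : Zd d) :
    Xm d (v + m) * tg v m * (Xm d (v + m))⁻¹ ∈ commutator (Fd d) :=
  (inferInstance : (commutator (Fd d)).Normal).conj_mem _ (tg_mem v m) _

lemma free_id (v n : Zd d) (k : Fin d) :
    Xm d v * wgen (n, k) * (Xm d v)⁻¹
      = (Xm d (v + n) * tg v n * (Xm d (v + n))⁻¹)
        * wgen (v + n, k)
        * (Xm d (v + (n + Pi.single k 1)) * tg v (n + Pi.single k 1)
            * (Xm d (v + (n + Pi.single k 1)))⁻¹)⁻¹ := by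
  simp only [wgen, tg]
  rw [show (v + n) + Pi.single k 1 = v + (n + Pi.single k 1) from add_assoc _ _ _]
  group

lemma conj_wgen (v n : Zd d) (k : Fin d) :
    xQ v * mkQ d (wgen (n, k)) * (xQ v)⁻¹
      = mkQ d (wgen (v + n, k)) * (uQ v n * (uQ v (n + Pi.single k 1))⁻¹) := by
  have exact_id : xQ v * mkQ d (wgen (n, k)) * (xQ v)⁻¹
      = uQ v n * mkQ d (wgen (v + n, k)) * (uQ v (n + Pi.single k 1))⁻¹ := by
    rw [uQ_eq_mk, uQ_eq_mk, xQ, ← map_inv, ← map_inv, ← map_mul, ← map_mul, ← map_mul, ← map_mul]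
    exact congrArg (mkQ d) (free_id v n k)
  have c1 : Commute (uQ v n) (mkQ d (wgen (v + n, k))) := by
    rw [uQ_eq_mk]; exact commQ (u_elt_mem v n) (wgen_mem _)
  rw [exact_id, c1.eq, mul_assoc]

lemma cA_single (p : Zd d × Fin d) :
    cA (Finsupp.single p 1)
      = Additive.ofMul (⟨mkQ d (wgen p), wgenQ_mem p⟩ : AA d) := by
  unfold cA
  rw [Finsupp.liftAddHom_apply_single]
  exact one_smul _ _

lemma UA_single' (v m : Zd d) :
    UA v (Finsupp.single m 1)
      = Additive.ofMul (⟨uQ v m, uQ_mem v m⟩ : AA d) := by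
  unfold UA
  rw [Finsupp.liftAddHom_apply_single]
  exact one_smul _ _

lemma comm3 {G : Type*} [CommGroup G] (a b c : G) : a⁻¹ * (b * c) = b * (c * a⁻¹) := by
  rw [mul_comm b c, ← mul_assoc, mul_comm a⁻¹ c]
  exact mul_comm _ _

lemma conj_full (v : Zd d) (γ : C1Z d) :
    xQ v * cc γ * (xQ v)⁻¹
      = cc (shiftZ d v γ) * (((Additive.toMul (UA v (bdZ d γ)) : AA d) : QQ d))⁻¹ := by
  have hΦ : (MonoidHom.toAdditive (conjA v)).comp cA
      = cA.comp (shiftZ d v) - (UA v).comp (bdZ d) := by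
    apply Finsupp.addHom_ext'
    intro p
    apply AddMonoidHom.ext_int
    show (MonoidHom.toAdditive (conjA v)) (cA (Finsupp.single p 1))
      = (cA.comp (shiftZ d v) - (UA v).comp (bdZ d)) (Finsupp.single p 1)
    have eR : (cA.comp (shiftZ d v) - (UA v).comp (bdZ d)) (Finsupp.single p 1)
        = Additive.ofMul ((⟨mkQ d (wgen (v + p.1, p.2)), wgenQ_mem _⟩ : AA d)
            * ((⟨uQ v p.1, uQ_mem v p.1⟩ : AA d)
              * (⟨uQ v (p.1 + Pi.single p.2 1), uQ_mem v _⟩ : AA d)⁻¹)) := by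
      rw [AddMonoidHom.sub_apply, AddMonoidHom.comp_apply, AddMonoidHom.comp_apply,
        shiftZ_single, bdZ_single, one_smul, map_sub, cA_single, UA_single', UA_single']
      rw [sub_sub_eq_add_sub]
      rw [← ofMul_mul]
      rw [sub_eq_add_neg, ← ofMul_inv, ← ofMul_mul]
      congr 1
      exact mul_assoc _ _ _
    rw [eR]
    rw [cA_single]
    show Additive.ofMul (conjA v (⟨mkQ d (wgen p), wgenQ_mem p⟩ : AA d)) = _
    congr 1
    apply Subtype.ext
    show xQ v * mkQ d (wgen p) * (xQ v)⁻¹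
      = mkQ d (wgen (v + p.1, p.2)) * (uQ v p.1 * (uQ v (p.1 + Pi.single p.2 1))⁻¹)
    exact conj_wgen v p.1 p.2
  have hγ := DFunLike.congr_fun hΦ γ
  rw [AddMonoidHom.sub_apply, AddMonoidHom.comp_apply, AddMonoidHom.comp_apply] at hγ
  have := congrArg (fun a : Additive (AA d) => ((Additive.toMul a : AA d) : QQ d)) hγ
  simp only [sub_eq_add_neg, toMul_add, toMul_neg] at this
  rw [show ((Additive.toMul ((MonoidHom.toAdditive (conjA v)) (cA γ)) : AA d) : QQ d)
      = xQ v * cc γ * (xQ v)⁻¹ from rfl] at this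
  rw [this]
  rfl

lemma em_sub (aq bq : QQ d) (ha : aq ∈ AA d) (hb : bq ∈ AA d) :
    ((Additive.toMul (Additive.ofMul (⟨aq, ha⟩ : AA d) - Additive.ofMul (⟨bq, hb⟩ : AA d)) : AA d) : QQ d)
      = aq * bq⁻¹ := by
  rw [sub_eq_add_neg, toMul_add, toMul_neg]
  rfl

lemma conj_dagger (v w : Zd d) (γ : C1Z d)
    (h : bdZ d γ = Finsupp.single w 1 - Finsupp.single (0 : Zd d) 1) :
    xQ v * cc γ * xQ w = cc (shiftZ d v γ) * xQ (v + w) := by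
  have hf := conj_full v γ
  rw [h, map_sub, UA_single', UA_single', em_sub, uQ_zero, inv_one, mul_one] at hf
  have hx : xQ v * xQ w = xQ (v + w) * mkQ d (tg v w) := by
    rw [xQ, xQ, xQ, ← map_mul, ← map_mul]
    congr 1
    rw [tg]
    group
  calc xQ v * cc γ * xQ w = (xQ v * cc γ * (xQ v)⁻¹) * (xQ v * xQ w) := by group
  _ = cc (shiftZ d v γ) * (uQ v w)⁻¹ * (xQ (v + w) * mkQ d (tg v w)) := by rw [hf, hx]
  _ = cc (shiftZ d v γ) * xQ (v + w) := by rw [uQ]; group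

end MH4

namespace MH5
open MH MH2 MH3 MH4

variable {d : ℕ} (D : FreeGroup (Fin d) → C1Z d)
  (hD1 : ∀ i : Fin d, D (FreeGroup.of i) = Finsupp.single ((0 : Zd d), i) 1)
  (hDmul : ∀ u v : FreeGroup (Fin d),
    D (u * v) = D u + shiftZ d (Multiplicative.toAdd (phiZ d u)) (D v))

include hD1 hDmul

lemma claim_star (a : Fd d) :
    mkQ d a = cc (D a) * xQ (Multiplicative.toAdd (phiZ d a)) := by
  have hpure : ∀ i : Fin d, (pure i : FreeGroup (Fin d)) = FreeGroup.of i := fun _ => rfl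
  induction a using FreeGroup.induction_on with
  | C1 =>
    rw [D_one D hDmul, cc_zero, map_one, map_one,
      show Multiplicative.toAdd (1 : Multiplicative (Zd d)) = 0 from rfl, xQ_zero, one_mul]
  | of i =>
    rw [hD1, cc_single, phiZ_of, toAdd_ofAdd, xQ, ← map_mul]
    congr 1
    rw [wgen, Xm_zero]
    simp only [zero_add]
    group
  | inv_of i _ =>
    rw [D_of_inv D hD1 hDmul, cc_neg, cc_single]
    rw [show phiZ d ((FreeGroup.of i)⁻¹) = (Multiplicative.ofAdd (Pi.single i (1:ℤ)))⁻¹ by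
      rw [show phiZ d ((FreeGroup.of i)⁻¹) = (phiZ d (FreeGroup.of i))⁻¹ from map_inv _ _, phiZ_of]]
    rw [show Multiplicative.toAdd ((Multiplicative.ofAdd (Pi.single i (1:ℤ)))⁻¹)
        = -(Pi.single i 1 : Zd d) from rfl]
    rw [xQ, ← map_inv, ← map_mul]
    congr 1
    simp only [wgen, neg_add_cancel, Xm_zero]
    group
  | mul x y ihx ihy =>
    have key := conj_dagger (Multiplicative.toAdd (phiZ d x)) (Multiplicative.toAdd (phiZ d y))
      (D y) (D_bd D hD1 hDmul y)
    rw [map_mul, ihx, ihy, hDmul, map_mul,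
      show Multiplicative.toAdd (phiZ d x * phiZ d y)
        = Multiplicative.toAdd (phiZ d x) + Multiplicative.toAdd (phiZ d y) from rfl]
    calc cc (D x) * xQ (Multiplicative.toAdd (phiZ d x))
          * (cc (D y) * xQ (Multiplicative.toAdd (phiZ d y)))
        = cc (D x) * (xQ (Multiplicative.toAdd (phiZ d x)) * cc (D y)
            * xQ (Multiplicative.toAdd (phiZ d y))) := by group
      _ = cc (D x) * (cc (shiftZ d (Multiplicative.toAdd (phiZ d x)) (D y))
            * xQ (Multiplicative.toAdd (phiZ d x) + Multiplicative.toAdd (phiZ d y))) := by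
          rw [key]
      _ = cc (D x) * cc (shiftZ d (Multiplicative.toAdd (phiZ d x)) (D y))
            * xQ (Multiplicative.toAdd (phiZ d x) + Multiplicative.toAdd (phiZ d y)) := by
          group
      _ = cc (D x + shiftZ d (Multiplicative.toAdd (phiZ d x)) (D y))
            * xQ (Multiplicative.toAdd (phiZ d x) + Multiplicative.toAdd (phiZ d y)) := by
          rw [cc_add]

end MH5

namespace MH6
open MH MH2 MH3 MH4 MH5

variable {d : ℕ} (D : FreeGroup (Fin d) → C1Z d)
  (hD1 : ∀ i : Fin d, D (FreeGroup.of i) = Finsupp.single ((0 : Zd d), i) 1)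
  (hDmul : ∀ u v : FreeGroup (Fin d),
    D (u * v) = D u + shiftZ d (Multiplicative.toAdd (phiZ d u)) (D v))

lemma comm_gen_mem (g h : Fd d) : ⁅g, h⁆ ∈ commutator (Fd d) := by
  rw [commutator_def]
  exact Subgroup.commutator_mem_commutator (Subgroup.mem_top _) (Subgroup.mem_top _)

include hDmul

lemma D_pow_comm {a : Fd d} (ha : a ∈ commutator (Fd d)) (n : ℕ) :
    D (a ^ n) = n • D a := by
  induction n with
  | zero => rw [pow_zero, D_one D hDmul, zero_smul]
  | succ n ih =>
    rw [pow_succ, D_comm_mul D hDmul a (pow_mem ha n), ih, succ_nsmul]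

lemma D_zpow_comm {a : Fd d} (ha : a ∈ commutator (Fd d)) (k : ℤ) :
    D (a ^ k) = k • D a := by
  cases k with
  | ofNat n => rw [Int.ofNat_eq_natCast, zpow_natCast, D_pow_comm D hDmul ha n, natCast_zsmul]
  | negSucc n =>
    rw [zpow_negSucc, D_comm_inv D hDmul (pow_mem ha (n+1)), D_pow_comm D hDmul ha (n+1),
      Int.negSucc_eq, neg_zsmul]
    norm_cast

lemma D_commutatorElement_zero {g h : Fd d} (hg : g ∈ commutator (Fd d))
    (hh : h ∈ commutator (Fd d)) : D ⁅g, h⁆ = 0 := by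
  rw [commutatorElement_def]
  rw [D_comm_mul D hDmul h⁻¹ (mul_mem (mul_mem hg hh) (inv_mem hg)),
    D_comm_mul D hDmul g⁻¹ (mul_mem hg hh),
    D_comm_mul D hDmul h hg,
    D_comm_inv D hDmul hg, D_comm_inv D hDmul hh]
  abel

lemma D_Fpp_zero {a : Fd d} (ha : a ∈ Fpp d) : D a = 0 := by
  let K : Subgroup (Fd d) :=
    { carrier := {x | x ∈ commutator (Fd d) ∧ D x = 0}
      one_mem' := ⟨one_mem _, D_one D hDmul⟩
      mul_mem' := by
        rintro x y ⟨hx, hx0⟩ ⟨hy, hy0⟩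
        exact ⟨mul_mem hx hy, by rw [D_comm_mul D hDmul y hx, hx0, hy0, add_zero]⟩
      inv_mem' := by
        rintro x ⟨hx, hx0⟩
        exact ⟨inv_mem hx, by rw [D_comm_inv D hDmul hx, hx0, neg_zero]⟩ }
  have hle : Fpp d ≤ K := by
    rw [Subgroup.commutator_le]
    intro g hg h hh
    exact ⟨comm_gen_mem g h, D_commutatorElement_zero D hDmul hg hh⟩
  exact (hle ha).2

include hD1

lemma D_wgen (p : Zd d × Fin d) :
    D (wgen p) = D (Xm d p.1) + Finsupp.single p 1 - D (Xm d (p.1 + Pi.single p.2 1)) := by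
  obtain ⟨n, k⟩ := p
  have hphi : Multiplicative.toAdd (phiZ d (Xm d n * FreeGroup.of k)) = n + Pi.single k 1 := by
    rw [map_mul, phiZ_Xm, phiZ_of]; rfl
  have hinv : shiftZ d (n + Pi.single k 1) (D (Xm d (n + Pi.single k 1))⁻¹)
      = - D (Xm d (n + Pi.single k 1)) := by
    have := D_inv' D hDmul (Xm d (n + Pi.single k 1))
    rwa [phiZ_Xm, toAdd_ofAdd] at this
  rw [wgen, hDmul (Xm d n * FreeGroup.of k), hphi, hinv, hDmul, hD1, phiZ_Xm, toAdd_ofAdd,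
    shiftZ_single, add_zero]
  abel

noncomputable def DcH : C1Z d →+ C1Z d :=
  Finsupp.liftAddHom fun p => zmultiplesHom (C1Z d) (D (wgen p))

noncomputable def LH : C0Z d →+ C1Z d :=
  Finsupp.liftAddHom fun v => zmultiplesHom (C1Z d) (D (Xm d v))

lemma DcH_eq (γ : C1Z d) : DcH D γ = γ - LH D (bdZ d γ) := by
  have : DcH D = AddMonoidHom.id (C1Z d) - (LH D).comp (bdZ d) := by
    apply Finsupp.addHom_ext'
    intro p
    apply AddMonoidHom.ext_int
    show DcH D (Finsupp.single p 1) = (AddMonoidHom.id (C1Z d) - (LH D).comp (bdZ d)) (Finsupp.single p 1)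
    rw [AddMonoidHom.sub_apply, AddMonoidHom.comp_apply, AddMonoidHom.id_apply, bdZ_single, one_smul,
      map_sub]
    unfold DcH LH
    rw [Finsupp.liftAddHom_apply_single, Finsupp.liftAddHom_apply_single,
      Finsupp.liftAddHom_apply_single]
    simp only [zmultiplesHom_apply, one_zsmul]
    rw [D_wgen D hD1 hDmul]
    abel
  rw [this]
  rfl

lemma mem_S (γ : C1Z d) : ∃ a ∈ commutator (Fd d), D a = DcH D γ := by
  induction γ using Finsupp.induction with
  | zero => exact ⟨1, one_mem _, by rw [map_zero, D_one D hDmul]⟩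
  | single_add p b f _ _ ih =>
    obtain ⟨a, ha, hDa⟩ := ih
    refine ⟨wgen p ^ b * a, mul_mem (zpow_mem (wgen_mem p) b) ha, ?_⟩
    rw [D_comm_mul D hDmul a (zpow_mem (wgen_mem p) b), map_add, hDa,
      D_zpow_comm D hDmul (wgen_mem p) b]
    congr 1
    unfold DcH
    rw [Finsupp.liftAddHom_apply_single]
    rfl

lemma surj (γ : C1Z d) (h : bdZ d γ = 0) : ∃ a ∈ commutator (Fd d), D a = γ := by
  have := mem_S D hD1 hDmul γ
  rwa [DcH_eq D hD1 hDmul, h, map_zero, sub_zero] at this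

lemma D_comm_gen (i j : Fin d) :
    D ⁅FreeGroup.of i, FreeGroup.of j⁆ = plaq d 0 i j := by
  have h1 : Multiplicative.toAdd (phiZ d (FreeGroup.of i * FreeGroup.of j))
      = (Pi.single i 1 + Pi.single j 1 : Zd d) := by
    rw [map_mul, phiZ_of, phiZ_of]; rfl
  have h2' : phiZ d (FreeGroup.of i * FreeGroup.of j * (FreeGroup.of i)⁻¹)
      = Multiplicative.ofAdd (Pi.single j 1 : Zd d) := by
    rw [map_mul, map_mul,
      show phiZ d ((FreeGroup.of i)⁻¹) = (phiZ d (FreeGroup.of i))⁻¹ from map_inv _ _,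
      phiZ_of, phiZ_of, ← ofAdd_add, ← ofAdd_neg, ← ofAdd_add]
    congr 1
    abel
  have h2 : Multiplicative.toAdd (phiZ d (FreeGroup.of i * FreeGroup.of j * (FreeGroup.of i)⁻¹))
      = (Pi.single j 1 : Zd d) := by
    rw [h2', toAdd_ofAdd]
  rw [commutatorElement_def,
    hDmul (FreeGroup.of i * FreeGroup.of j * (FreeGroup.of i)⁻¹),
    hDmul (FreeGroup.of i * FreeGroup.of j),
    hDmul (FreeGroup.of i), h1, h2,
    hD1, hD1, D_of_inv D hD1 hDmul, D_of_inv D hD1 hDmul,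
    map_neg, map_neg, shiftZ_single, shiftZ_single, shiftZ_single, phiZ_of, toAdd_ofAdd]
  rw [show (Pi.single i 1 + Pi.single j 1 : Zd d) + -(Pi.single i 1) = Pi.single j 1 by abel,
    show (Pi.single j 1 : Zd d) + -(Pi.single j 1) = 0 by abel,
    show (Pi.single i 1 : Zd d) + 0 = Pi.single i 1 from add_zero _]
  rw [plaq]
  simp only [zero_add]
  abel

lemma D_plaq (m : Zd d) (i j : Fin d) :
    D (Xm d m * ⁅FreeGroup.of i, FreeGroup.of j⁆ * (Xm d m)⁻¹) = plaq d m i j := by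
  rw [D_conj D hDmul (Xm d m) (comm_gen_mem _ _), D_comm_gen D hD1 hDmul,
    phiZ_Xm, toAdd_ofAdd, plaq, plaq, map_sub, map_sub, map_add,
    shiftZ_single, shiftZ_single, shiftZ_single, shiftZ_single]
  rw [show m + (0 + Pi.single i 1) = m + Pi.single i 1 by abel,
    show m + (0 + Pi.single j 1) = m + Pi.single j 1 by abel,
    show m + (0:Zd d) = m from add_zero _]

end MH6

/-- With `φ : F_d → ℤ^d` the abelianization, `D` induces a `ℤ^d`-equivariant isomorphism
from `F_d'/F_d''` (with the action induced by conjugation) onto `Z_1(ℤ^d) = H_1(E^d)`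
sending the class of `X^m [X_i,X_j] X^{-m}` to the plaquette `p(m,i,j)`; in particular
the free metabelian group `Met(d) = F_d/F_d''` is an extension of `ℤ^d` by `H_1(E^d)`. -/
theorem metabelian_homology {d : ℕ} (hd : 1 ≤ d)
    (D : FreeGroup (Fin d) → C1Z d)
    (hD1 : ∀ i : Fin d, D (FreeGroup.of i) = Finsupp.single ((0 : Zd d), i) 1)
    (hDmul : ∀ u v : FreeGroup (Fin d),
      D (u * v) = D u + shiftZ d (Multiplicative.toAdd (phiZ d u)) (D v)) :
    (∀ a ∈ commutator (FreeGroup (Fin d)), D a ∈ (bdZ d).ker) ∧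
    (∀ a b : FreeGroup (Fin d), a ∈ commutator (FreeGroup (Fin d)) →
      b ∈ commutator (FreeGroup (Fin d)) → D (a * b) = D a + D b) ∧
    (∀ γ : C1Z d, γ ∈ (bdZ d).ker → ∃ a ∈ commutator (FreeGroup (Fin d)), D a = γ) ∧
    (∀ a ∈ commutator (FreeGroup (Fin d)),
      (D a = 0 ↔ a ∈ (⁅commutator (FreeGroup (Fin d)), commutator (FreeGroup (Fin d))⁆ :
        Subgroup (FreeGroup (Fin d))))) ∧
    (∀ (w : FreeGroup (Fin d)), ∀ a ∈ commutator (FreeGroup (Fin d)),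
      D (w * a * w⁻¹) = shiftZ d (Multiplicative.toAdd (phiZ d w)) (D a)) ∧
    (∀ (m : Zd d) (i j : Fin d), i < j →
      D (Xm d m * ⁅FreeGroup.of i, FreeGroup.of j⁆ * (Xm d m)⁻¹) = plaq d m i j) ∧
    (∃ π : (FreeGroup (Fin d) ⧸
        (⁅commutator (FreeGroup (Fin d)), commutator (FreeGroup (Fin d))⁆ :
          Subgroup (FreeGroup (Fin d)))) →* Multiplicative (Zd d),
      (∀ w : FreeGroup (Fin d), π (QuotientGroup.mk w) = phiZ d w) ∧
      Function.Surjective π ∧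
      π.ker = Subgroup.map
        (QuotientGroup.mk' (⁅commutator (FreeGroup (Fin d)), commutator (FreeGroup (Fin d))⁆ :
          Subgroup (FreeGroup (Fin d)))) (commutator (FreeGroup (Fin d)))) := by
  open MH MH2 MH3 MH4 MH5 MH6 in
  have hFppker : (⁅commutator (FreeGroup (Fin d)), commutator (FreeGroup (Fin d))⁆ :
      Subgroup (FreeGroup (Fin d))) ≤ (phiZ d).ker := by
    intro x hx
    have h1 : x ∈ commutator (FreeGroup (Fin d)) := by
      have := Subgroup.commutator_mono (le_top : commutator (FreeGroup (Fin d)) ≤ ⊤)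
        (le_top : commutator (FreeGroup (Fin d)) ≤ ⊤) hx
      rwa [← commutator_def] at this
    rw [← MH2.comm_eq_ker]
    exact h1
  refine ⟨?_, ?_, ?_, ?_, ?_, ?_, ?_⟩
  · intro a ha
    rw [AddMonoidHom.mem_ker, MH3.D_bd D hD1 hDmul a, (MH2.mem_comm_iff a).mp ha,
      show Multiplicative.toAdd (1 : Multiplicative (Zd d)) = 0 from rfl, sub_self]
  · intro a b ha _
    exact MH3.D_comm_mul D hDmul b ha
  · intro γ hγ
    exact MH6.surj D hD1 hDmul γ (AddMonoidHom.mem_ker.mp hγ)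
  · intro a ha
    constructor
    · intro h0
      have hcs := MH5.claim_star D hD1 hDmul a
      rw [h0, MH4.cc_zero, one_mul, (MH2.mem_comm_iff a).mp ha,
        show Multiplicative.toAdd (1 : Multiplicative (Zd d)) = 0 from rfl, MH4.xQ_zero] at hcs
      exact (QuotientGroup.eq_one_iff a).mp hcs
    · intro hF
      exact MH6.D_Fpp_zero D hDmul hF
  · intro w a ha
    exact MH3.D_conj D hDmul w ha
  · intro m i j _
    exact MH6.D_plaq D hD1 hDmul m i j
  · refine ⟨QuotientGroup.lift _ (phiZ d) hFppker, ?_, ?_, ?_⟩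
    · intro w
      rfl
    · intro z
      exact ⟨QuotientGroup.mk (Xm d (Multiplicative.toAdd z)),
        by
          show phiZ d (Xm d (Multiplicative.toAdd z)) = z
          rw [MH.phiZ_Xm, ofAdd_toAdd]⟩
    · ext x
      constructor
      · intro hx
        induction x using QuotientGroup.induction_on with
        | H w =>
          rw [MonoidHom.mem_ker] at hx
          rw [show (QuotientGroup.lift _ (phiZ d) hFppker) (QuotientGroup.mk w) = phiZ d w
            from rfl] at hx
          exact ⟨w, (MH2.mem_comm_iff w).mpr hx, rfl⟩
      · rintro ⟨w, hw, rfl⟩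
        rw [MonoidHom.mem_ker]
        show QuotientGroup.lift _ (phiZ d) hFppker (QuotientGroup.mk w) = 1
        rw [show (QuotientGroup.lift _ (phiZ d) hFppker) (QuotientGroup.mk w) = phiZ d w
          from rfl]
        exact (MH2.mem_comm_iff w).mp hw
end

section
/- The cycle group Z_1(ℤ^d) = H_1(E^d) is generated as an abelian group by the plaquettes p(m,i,j) with m ∈ ℤ^d and 1 ≤ i < j ≤ d. -/
namespace PlaqAux

variable {d : ℕ}

/-- The subgroup generated by plaquettes with `i < j`. -/
noncomputable def Hgen (d : ℕ) : AddSubgroup (C1Z d) :=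
  AddSubgroup.closure {γ : C1Z d | ∃ (m : Zd d) (i j : Fin d), i < j ∧ γ = plaq d m i j}

/-- A single edge. -/
noncomputable def edge (m : Zd d) (i : Fin d) : C1Z d := Finsupp.single (m, i) 1

/-- The `i`-th coordinate unit vector. -/
def eZ (i : Fin d) : Zd d := Pi.single i 1

/-- Straight segment of length `k` in direction `i` starting at `b`. -/
noncomputable def seg (b : Zd d) (i : Fin d) (k : ℤ) : C1Z d :=
  (∑ t ∈ Finset.range k.toNat, edge (b + (t : ℤ) • eZ i) i)
    - ∑ t ∈ Finset.range (-k).toNat, edge (b - ((t : ℤ) + 1) • eZ i) i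

lemma seg_zero (b : Zd d) (i : Fin d) : seg b i 0 = 0 := by
  simp [seg]

lemma seg_succ (b : Zd d) (i : Fin d) (k : ℤ) :
    seg b i (k + 1) = seg b i k + edge (b + k • eZ i) i := by
  rcases le_or_gt 0 k with hk | hk
  · have h1 : (k + 1).toNat = k.toNat + 1 := by omega
    have h2 : (-(k + 1)).toNat = 0 := by omega
    have h3 : (-k).toNat = 0 := by omega
    simp only [seg, h1, h2, h3, Finset.range_zero, Finset.sum_empty, sub_zero,
      Finset.sum_range_succ]
    rw [Int.toNat_of_nonneg hk]
  · have h1 : (k + 1).toNat = 0 := by omega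
    have h2 : k.toNat = 0 := by omega
    have h3 : (-k).toNat = (-(k + 1)).toNat + 1 := by omega
    have h4 : ((((-(k + 1)).toNat : ℤ)) + 1) = -k := by omega
    simp only [seg, h1, h2, h3, Finset.range_zero, Finset.sum_empty, zero_sub,
      Finset.sum_range_succ, h4]
    rw [neg_smul, sub_neg_eq_add]
    abel

lemma seg_pred (b : Zd d) (i : Fin d) (k : ℤ) :
    seg b i (k - 1) = seg b i k - edge (b + (k - 1) • eZ i) i := by
  have := seg_succ b i (k - 1)
  rw [sub_add_cancel] at this
  rw [this]; abel

lemma plaq_mem (m : Zd d) {i j : Fin d} (hij : i < j) : plaq d m i j ∈ Hgen d :=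
  AddSubgroup.subset_closure ⟨m, i, j, hij, rfl⟩

/-- Ladder lemma: translating a segment across one unit in direction `i < j`
changes it, modulo plaquettes, by the two rungs. -/
lemma ladder (b : Zd d) {i j : Fin d} (hij : i < j) (k : ℤ) :
    seg (b + eZ i) j k - seg b j k - edge (b + k • eZ j) i + edge b i ∈ Hgen d := by
  induction k using Int.induction_on with
  | zero =>
    have : seg (b + eZ i) j 0 - seg b j 0 - edge (b + (0 : ℤ) • eZ j) i + edge b i = 0 := by
      rw [seg_zero, seg_zero, zero_smul, add_zero]; abel
    rw [this]; exact zero_mem _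
  | succ k ih =>
    have key : seg (b + eZ i) j ((k : ℤ) + 1) - seg b j ((k : ℤ) + 1)
          - edge (b + ((k : ℤ) + 1) • eZ j) i + edge b i
        = (seg (b + eZ i) j (k : ℤ) - seg b j (k : ℤ)
            - edge (b + (k : ℤ) • eZ j) i + edge b i)
          + plaq d (b + (k : ℤ) • eZ j) i j := by
      rw [seg_succ, seg_succ]
      have p1 : b + eZ i + (k : ℤ) • eZ j = b + (k : ℤ) • eZ j + eZ i := by
        rw [add_right_comm]
      have p2 : b + ((k : ℤ) + 1) • eZ j = b + (k : ℤ) • eZ j + eZ j := by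
        rw [add_smul, one_smul, ← add_assoc]
      rw [p1, p2]
      simp only [plaq, edge, eZ]
      abel
    rw [key]
    exact add_mem ih (plaq_mem _ hij)
  | pred k ih =>
    have key : seg (b + eZ i) j (-(k : ℤ) - 1) - seg b j (-(k : ℤ) - 1)
          - edge (b + (-(k : ℤ) - 1) • eZ j) i + edge b i
        = (seg (b + eZ i) j (-(k : ℤ)) - seg b j (-(k : ℤ))
            - edge (b + (-(k : ℤ)) • eZ j) i + edge b i)
          - plaq d (b + (-(k : ℤ) - 1) • eZ j) i j := by
      rw [seg_pred, seg_pred]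
      have p1 : b + eZ i + (-(k : ℤ) - 1) • eZ j = b + (-(k : ℤ) - 1) • eZ j + eZ i := by
        rw [add_right_comm]
      have p2 : b + (-(k : ℤ)) • eZ j = b + (-(k : ℤ) - 1) • eZ j + eZ j := by
        have hs : (-(k : ℤ)) • eZ j = (-(k : ℤ) - 1) • eZ j + (1 : ℤ) • eZ j := by
          rw [← add_smul]; norm_num
        rw [hs, one_smul, ← add_assoc]
      rw [p1, p2]
      simp only [plaq, edge, eZ]
      abel
    rw [key]
    exact sub_mem ih (plaq_mem _ hij)

/-- Truncation: first `n` coordinates of `m`, rest zero. -/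
def B (m : Zd d) (n : ℕ) : Zd d := fun t => if (t : ℕ) < n then m t else 0

lemma B_last (m : Zd d) : B m d = m := by
  funext t; simp [B, t.isLt]

lemma B_eq_of_le (m : Zd d) (i : Fin d) {n : ℕ} (h : n ≤ (i : ℕ)) :
    B (m + eZ i) n = B m n := by
  funext t
  by_cases ht : (t : ℕ) < n
  · have hti : t ≠ i := by
      intro he; subst he; omega
    simp [B, ht, eZ, Pi.single_apply, hti]
  · simp [B, ht]

lemma B_add (m : Zd d) (i : Fin d) {n : ℕ} (h : (i : ℕ) < n) :
    B (m + eZ i) n = B m n + eZ i := by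
  funext t
  by_cases ht : (t : ℕ) < n
  · simp [B, ht]
  · have hti : t ≠ i := by
      intro he; subst he; omega
    simp [B, ht, eZ, Pi.single_apply, hti]

lemma B_succ (m : Zd d) {n : ℕ} (hn : n < d) :
    B m (n + 1) = B m n + (m ⟨n, hn⟩) • eZ ⟨n, hn⟩ := by
  funext t
  rcases lt_trichotomy (t : ℕ) n with ht | ht | ht
  · have ht1 : (t : ℕ) < n + 1 := by omega
    have hti : t ≠ ⟨n, hn⟩ := by
      intro he; subst he; simp at ht
    simp [B, ht, ht1, eZ, Pi.single_apply, hti]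
  · have hte : t = ⟨n, hn⟩ := by
      apply Fin.ext; exact ht
    subst hte
    simp [B, eZ, Pi.single_apply]
  · have ht1 : ¬ (t : ℕ) < n + 1 := by omega
    have ht2 : ¬ (t : ℕ) < n := by omega
    have hti : t ≠ ⟨n, hn⟩ := by
      intro he; subst he; simp at ht
    simp [B, ht1, ht2, eZ, Pi.single_apply, hti]

/-- Partial staircase path using the first `j` coordinates. -/
noncomputable def T (j : ℕ) (m : Zd d) : C1Z d :=
  ∑ n ∈ Finset.range j, if h : n < d then seg (B m n) ⟨n, h⟩ (m ⟨n, h⟩) else 0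

lemma apply_ne (m : Zd d) (i t : Fin d) (h : t ≠ i) : (m + eZ i) t = m t := by
  simp [eZ, Pi.single_apply, h]

lemma apply_self (m : Zd d) (i : Fin d) : (m + eZ i) i = m i + 1 := by
  simp [eZ, Pi.single_apply]

lemma T_key (m : Zd d) (i : Fin d) :
    ∀ j, (i : ℕ) + 1 ≤ j → j ≤ d →
      T j (m + eZ i) - T j m - edge (B m j) i ∈ Hgen d := by
  intro j hj
  induction j, hj using Nat.le_induction with
  | base =>
    intro _
    have hsum : ∀ n ∈ Finset.range (i : ℕ),
        (if h : n < d then seg (B (m + eZ i) n) ⟨n, h⟩ ((m + eZ i) ⟨n, h⟩) else 0)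
          = (if h : n < d then seg (B m n) ⟨n, h⟩ (m ⟨n, h⟩) else 0) := by
      intro n hn
      rw [Finset.mem_range] at hn
      have hnd : n < d := lt_trans hn i.isLt
      have hne : (⟨n, hnd⟩ : Fin d) ≠ i := by
        intro he
        have : n = (i : ℕ) := congrArg Fin.val he
        omega
      rw [dif_pos hnd, dif_pos hnd, B_eq_of_le m i (le_of_lt hn),
        apply_ne m i _ hne]
    have hT : ∀ x : Zd d, T ((i : ℕ) + 1) x = T (i : ℕ) x
        + (if h : (i : ℕ) < d then seg (B x (i : ℕ)) ⟨(i : ℕ), h⟩ (x ⟨(i : ℕ), h⟩) else 0) := by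
      intro x
      simp [T, Finset.sum_range_succ]
    have hTeq : T (i : ℕ) (m + eZ i) = T (i : ℕ) m := Finset.sum_congr rfl hsum
    have hmk : (⟨(i : ℕ), i.isLt⟩ : Fin d) = i := rfl
    have key : T ((i : ℕ) + 1) (m + eZ i) - T ((i : ℕ) + 1) m - edge (B m ((i : ℕ) + 1)) i
        = 0 := by
      rw [hT, hT, hTeq, dif_pos i.isLt, dif_pos i.isLt, hmk,
        B_eq_of_le m i (le_refl _), apply_self, seg_succ,
        B_succ m i.isLt, hmk]
      abel
    rw [key]; exact zero_mem _
  | succ j hij ih =>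
    intro hjd
    have hjd' : j < d := hjd
    have hjle : j ≤ d := le_of_lt hjd'
    have hne : (⟨j, hjd'⟩ : Fin d) ≠ i := by
      intro he
      have : j = (i : ℕ) := congrArg Fin.val he
      omega
    have hilt : i < (⟨j, hjd'⟩ : Fin d) := by
      have : (i : ℕ) < j := hij
      exact this
    have hT : ∀ x : Zd d, T (j + 1) x = T j x + seg (B x j) ⟨j, hjd'⟩ (x ⟨j, hjd'⟩) := by
      intro x
      simp [T, Finset.sum_range_succ, hjd']
    have hBadd : B (m + eZ i) j = B m j + eZ i := B_add m i hij
    have key : T (j + 1) (m + eZ i) - T (j + 1) m - edge (B m (j + 1)) i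
        = (T j (m + eZ i) - T j m - edge (B m j) i)
          + (seg (B m j + eZ i) ⟨j, hjd'⟩ (m ⟨j, hjd'⟩)
              - seg (B m j) ⟨j, hjd'⟩ (m ⟨j, hjd'⟩)
              - edge (B m j + (m ⟨j, hjd'⟩) • eZ ⟨j, hjd'⟩) i + edge (B m j) i) := by
      rw [hT, hT, hBadd, apply_ne m i _ hne, B_succ m hjd']
      abel
    rw [key]
    exact add_mem (ih hjle) (ladder (B m j) hilt (m ⟨j, hjd'⟩))

/-- Path chain from the origin to `m` along the staircase spanning tree. -/
noncomputable def Pc (m : Zd d) : C1Z d := T d m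

lemma edge_key (m : Zd d) (i : Fin d) :
    edge m i - (Pc (m + eZ i) - Pc m) ∈ Hgen d := by
  have h := T_key m i d i.isLt (le_refl d)
  rw [B_last] at h
  have := neg_mem h
  have heq : -(T d (m + eZ i) - T d m - edge m i)
      = edge m i - (Pc (m + eZ i) - Pc m) := by
    simp only [Pc]; abel
  rwa [heq] at this

/-- The retraction on edges: replace an edge by the difference of tree paths. -/
noncomputable def rHom (d : ℕ) : C1Z d →+ C1Z d :=
  Finsupp.liftAddHom fun q => zmultiplesHom (C1Z d) (Pc (q.1 + eZ q.2) - Pc q.1)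

/-- Lift of the path map to 0-chains. -/
noncomputable def PHom (d : ℕ) : C0Z d →+ C1Z d :=
  Finsupp.liftAddHom fun m => zmultiplesHom (C1Z d) (Pc m)

lemma rHom_eq : rHom d = (PHom d).comp (bdZ d) := by
  apply Finsupp.addHom_ext
  intro q n
  have hb : bdZ d (Finsupp.single q n)
      = Finsupp.single (q.1 + Pi.single q.2 1) n - Finsupp.single q.1 n := by
    simp [bdZ, Finsupp.liftAddHom_apply_single, zmultiplesHom_apply, smul_sub,
      Finsupp.smul_single]
  rw [AddMonoidHom.comp_apply, hb, map_sub]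
  simp [rHom, PHom, eZ, Finsupp.liftAddHom_apply_single, zmultiplesHom_apply, smul_sub]

lemma sub_rHom_mem (γ : C1Z d) : γ - rHom d γ ∈ Hgen d := by
  induction γ using Finsupp.induction with
  | zero => simp only [map_zero, sub_zero]; exact zero_mem _
  | single_add q n f _ _ ih =>
    have hs : Finsupp.single q n - rHom d (Finsupp.single q n)
        = n • (edge q.1 q.2 - (Pc (q.1 + eZ q.2) - Pc q.1)) := by
      rw [smul_sub]
      have h1 : rHom d (Finsupp.single q n) = n • (Pc (q.1 + eZ q.2) - Pc q.1) := by
        simp [rHom, Finsupp.liftAddHom_apply_single, zmultiplesHom_apply]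
      have h2 : (Finsupp.single q n : C1Z d) = n • edge q.1 q.2 := by
        simp [edge]
      rw [h1, h2]
    have key : (Finsupp.single q n + f) - rHom d (Finsupp.single q n + f)
        = (Finsupp.single q n - rHom d (Finsupp.single q n)) + (f - rHom d f) := by
      rw [map_add]; abel
    rw [key]
    exact add_mem (hs ▸ zsmul_mem (edge_key q.1 q.2) n) ih

end PlaqAux

/-- The cycle group `Z_1(ℤ^d) = H_1(E^d)` is generated, as an abelian group, by the
plaquettes `p(m,i,j)` with `m ∈ ℤ^d` and `i < j`. -/
theorem plaquettes_generate {d : ℕ} (hd : 1 ≤ d) :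
    AddSubgroup.closure
        {γ : C1Z d | ∃ (m : Zd d) (i j : Fin d), i < j ∧ γ = plaq d m i j}
      = (bdZ d).ker := by
  apply le_antisymm
  · rw [AddSubgroup.closure_le]
    rintro γ ⟨m, i, j, hij, rfl⟩
    rw [SetLike.mem_coe, AddMonoidHom.mem_ker]
    simp only [plaq, bdZ, map_add, map_sub, Finsupp.liftAddHom_apply_single,
      zmultiplesHom_apply, one_zsmul]
    rw [add_right_comm m (Pi.single i 1) (Pi.single j 1)]
    abel
  · intro γ hγ
    have h0 : PlaqAux.rHom d γ = 0 := by
      rw [PlaqAux.rHom_eq, AddMonoidHom.comp_apply, AddMonoidHom.mem_ker.mp hγ, map_zero]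
    have := PlaqAux.sub_rHom_mem γ
    rw [h0, sub_zero] at this
    exact this
end

section
/- For d = 2, the family of plaquettes (p(m))_{m ∈ ℤ²} is a basis of the free abelian group Z_1(ℤ²): the plaquettes are ℤ-linearly independent and generate Z_1(ℤ²) = H_1(E²). -/
/-- The lattice `ℤ²`. -/
abbrev Z2 : Type := Fin 2 → ℤ

/-- Edge chains of the grid complex `E²` (Cayley graph of `ℤ²`):
`Finsupp.single (m, i) 1` is the edge from `m` to `m + e i`. -/
abbrev C1Z2 : Type := (Z2 × Fin 2) →₀ ℤ

/-- Vertex chains: the free abelian group on `ℤ²`. -/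
abbrev C0Z2 : Type := Z2 →₀ ℤ

/-- The boundary map `∂ δ_{(m,i)} = δ_{m + e i} - δ_m` as a `ℤ`-linear map; its kernel
is the cycle group `Z_1(ℤ²) = H_1(E²)`. -/
noncomputable def bdL : C1Z2 →ₗ[ℤ] C0Z2 :=
  Finsupp.lsum ℤ fun p =>
    LinearMap.toSpanSingleton ℤ C0Z2
      (Finsupp.single (p.1 + Pi.single p.2 1) 1 - Finsupp.single p.1 1)

/-- The plaquette `p(m) = δ_{(m,1)} + δ_{(m+e₁,2)} - δ_{(m+e₂,1)} - δ_{(m,2)}`. -/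
noncomputable def plaq2 (m : Z2) : C1Z2 :=
  Finsupp.single (m, 0) 1 + Finsupp.single (m + Pi.single 0 1, 1) 1
    - Finsupp.single (m + Pi.single 1 1, 0) 1 - Finsupp.single (m, 1) 1

/-! ### Auxiliary lemmas -/

lemma fin2_ext (u v : Z2) (h0 : u 0 = v 0) (h1 : u 1 = v 1) : u = v := by
  funext j; fin_cases j <;> assumption

lemma sum_delta {α : Type*} [DecidableEq α] (c : α →₀ ℤ) (y : α) :
    (c.sum fun m a => a * (if m = y then (1:ℤ) else 0)) = c y := by
  rw [Finsupp.sum]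
  simp only [mul_ite, mul_one, mul_zero]
  rw [Finset.sum_ite_eq' c.support y]
  split_ifs with h
  · rfl
  · exact (Finsupp.notMem_support_iff.mp h).symm

lemma plaq_apply0 (m x : Z2) :
    plaq2 m (x, 0) = (if m = x then (1:ℤ) else 0)
      - (if m = x - Pi.single 1 1 then 1 else 0) := by
  simp [plaq2, Finsupp.single_apply, Prod.ext_iff, eq_sub_iff_add_eq, eq_comm]

lemma lc_apply0 (c : Z2 →₀ ℤ) (x : Z2) :
    (Finsupp.linearCombination ℤ plaq2 c) (x, 0) = c x - c (x - Pi.single 1 1) := by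
  rw [Finsupp.linearCombination_apply, Finsupp.sum_apply]
  have : ∀ (m : Z2) (a : ℤ), (a • plaq2 m) (x, 0)
      = a * (if m = x then (1:ℤ) else 0) - a * (if m = x - Pi.single 1 1 then 1 else 0) := by
    intro m a
    rw [Finsupp.smul_apply, plaq_apply0, smul_eq_mul, mul_sub]
  simp only [this]
  rw [Finsupp.sum_sub, sum_delta, sum_delta]

lemma ind1 (p : Z2 × Fin 2) (x : Z2) :
    (if p.1 = x then (1:ℤ) else 0)
      = (if p = (x, 0) then (1:ℤ) else 0) + (if p = (x, 1) then 1 else 0) := by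
  obtain ⟨m, i⟩ := p
  fin_cases i <;> simp [Prod.ext_iff]

lemma ind2 (p : Z2 × Fin 2) (x : Z2) :
    (if p.1 + Pi.single p.2 1 = x then (1:ℤ) else 0)
      = (if p = (x - Pi.single 0 1, 0) then (1:ℤ) else 0)
        + (if p = (x - Pi.single 1 1, 1) then 1 else 0) := by
  obtain ⟨m, i⟩ := p
  fin_cases i <;> simp [Prod.ext_iff, eq_sub_iff_add_eq]

lemma bdL_apply (z : C1Z2) (x : Z2) :
    bdL z x = z (x - Pi.single 0 1, 0) + z (x - Pi.single 1 1, 1) - z (x, 0) - z (x, 1) := by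
  rw [bdL, Finsupp.lsum_apply, Finsupp.sum_apply]
  have : ∀ (p : Z2 × Fin 2) (a : ℤ),
      ((LinearMap.toSpanSingleton ℤ C0Z2
        (Finsupp.single (p.1 + Pi.single p.2 1) 1 - Finsupp.single p.1 1)) a) x
      = (a * (if p = (x - Pi.single 0 1, 0) then (1:ℤ) else 0)
          + a * (if p = (x - Pi.single 1 1, 1) then 1 else 0))
        - (a * (if p = (x, 0) then (1:ℤ) else 0) + a * (if p = (x, 1) then 1 else 0)) := by
    intro p a
    rw [LinearMap.toSpanSingleton_apply, Finsupp.smul_apply, Finsupp.sub_apply,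
      Finsupp.single_apply, Finsupp.single_apply, smul_eq_mul, mul_sub,
      ind1 p x, ind2 p x, mul_add, mul_add]
  simp only [this]
  rw [Finsupp.sum_sub, Finsupp.sum_add, Finsupp.sum_add, sum_delta, sum_delta, sum_delta, sum_delta]
  ring

lemma bdL_single (p : Z2 × Fin 2) (a : ℤ) :
    bdL (Finsupp.single p a)
      = a • (Finsupp.single (p.1 + Pi.single p.2 1) 1 - Finsupp.single p.1 1) := by
  rw [bdL, Finsupp.lsum_single, LinearMap.toSpanSingleton_apply]

lemma bdL_plaq (m : Z2) : bdL (plaq2 m) = 0 := by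
  simp only [plaq2, map_add, map_sub, bdL_single, one_smul]
  rw [show m + Pi.single 0 1 + Pi.single 1 1 = m + Pi.single 1 1 + Pi.single 0 1 from
    add_right_comm m _ _]
  abel

lemma shift_vanish (g : Z2 → ℤ) (s : Finset Z2) (hs : ∀ x, g x ≠ 0 → x ∈ s)
    (hg : ∀ x, g x = g (x + Pi.single 1 1)) : ∀ x, g x = 0 := by
  intro x
  have key : ∀ n : ℕ, g x = g (x + n • (Pi.single 1 1 : Z2)) := by
    intro n
    induction n with
    | zero => simp
    | succ n ih => rw [ih, hg, succ_nsmul, ← add_assoc]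
  set K : ℕ := s.sup fun m => (m 1).toNat with hK
  set n : ℕ := K + (x 1).natAbs + 1 with hn
  clear_value n
  clear_value K
  rw [key n]
  by_contra h
  have hmem := hs _ h
  have h2 := Finset.le_sup (f := fun m => (m 1).toNat) hmem
  rw [← hK] at h2
  replace h2 : ((x + n • (Pi.single 1 1 : Z2)) 1).toNat ≤ K := h2
  have h3 : (x + n • (Pi.single 1 1 : Z2)) 1 = x 1 + n := by
    simp [Pi.smul_apply]
  rw [h3] at h2
  have h4 : x 1 + (n:ℤ) ≤ ((x 1 + (n:ℤ)).toNat : ℤ) := Int.self_le_toNat _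
  have h5 : ((x 1 + (n:ℤ)).toNat : ℤ) ≤ (K:ℤ) := Int.ofNat_le.mpr h2
  clear hK hs hg key h hmem h2 h3
  omega

lemma col_sum (z : C1Z2) (hz : bdL z = 0) (a : ℤ) :
    (z.sum fun p t => if p.2 = 0 ∧ p.1 0 = a then t else 0) = 0 := by
  set g : Z2 → ℤ := fun w => if w 0 ≤ a then 1 else 0 with hgdef
  set G : C0Z2 →ₗ[ℤ] ℤ := Finsupp.lsum ℤ fun v => LinearMap.toSpanSingleton ℤ ℤ (g v) with hG
  set f : Z2 × Fin 2 → ℤ →ₗ[ℤ] C0Z2 := fun p => LinearMap.toSpanSingleton ℤ C0Z2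
      (Finsupp.single (p.1 + Pi.single p.2 1) 1 - Finsupp.single p.1 1) with hf
  have e2 : (z.sum fun p t => f p t) = bdL z := rfl
  have h0 : (z.sum fun p t => G (f p t)) = 0 := by
    rw [← map_finsuppSum G z fun p t => f p t, e2, hz, map_zero]
  have hterm : ∀ (p : Z2 × Fin 2) (t : ℤ),
      G (f p t) = -(if p.2 = 0 ∧ p.1 0 = a then t else 0) := by
    intro p t
    rw [hf, LinearMap.toSpanSingleton_apply, map_smul, map_sub]
    have hs : ∀ w : Z2, G (Finsupp.single w 1) = g w := by
      intro w
      rw [hG, Finsupp.lsum_single, LinearMap.toSpanSingleton_apply, smul_eq_mul, one_mul]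
    rw [hs, hs, hgdef]
    obtain ⟨m, i⟩ := p
    fin_cases i <;>
      simp only [smul_eq_mul, Pi.add_apply, Pi.single_apply] <;>
      norm_num <;>
      split_ifs <;> omega
  simp only [hterm] at h0
  rw [Finsupp.sum, Finset.sum_neg_distrib, neg_eq_zero] at h0
  rw [Finsupp.sum]
  exact h0

/-- Key spanning lemma: every cycle is a combination of plaquettes. -/
lemma ker_le_span (z : C1Z2) (hz : bdL z = 0) :
    z ∈ Submodule.span ℤ (Set.range plaq2) := by
  classical
  -- the potential function
  set c : Z2 → ℤ :=
    fun m => -(∑ e ∈ z.support, if e.2 = 0 ∧ e.1 0 = m 0 ∧ m 1 < e.1 1 then z e else 0)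
    with hc
  -- telescoping identity
  have htel : ∀ m : Z2, c m - c (m - Pi.single 1 1) = z (m, (0 : Fin 2)) := by
    intro m
    have hm0 : (m - Pi.single 1 1 : Z2) 0 = m 0 := by simp
    have hm1 : (m - Pi.single 1 1 : Z2) 1 = m 1 - 1 := by simp
    have key : ∀ e : Z2 × Fin 2,
        (if e.2 = 0 ∧ e.1 0 = m 0 ∧ m 1 - 1 < e.1 1 then z e else 0)
          - (if e.2 = 0 ∧ e.1 0 = m 0 ∧ m 1 < e.1 1 then z e else 0)
        = if e = (m, (0 : Fin 2)) then z e else 0 := by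
      intro e
      by_cases he : e = (m, (0 : Fin 2))
      · subst he
        rw [if_pos ⟨rfl, rfl, (by omega : m 1 - 1 < m 1)⟩, if_neg (fun h => absurd h.2.2 (lt_irrefl _)),
          sub_zero, if_pos rfl]
      · have hne : ¬(e.2 = 0 ∧ e.1 0 = m 0 ∧ e.1 1 = m 1) := by
          rintro ⟨h2, h0', h1'⟩
          exact he (Prod.ext (fin2_ext _ _ h0' h1') h2)
        have hiff : (e.2 = 0 ∧ e.1 0 = m 0 ∧ m 1 - 1 < e.1 1)
            ↔ (e.2 = 0 ∧ e.1 0 = m 0 ∧ m 1 < e.1 1) := by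
          constructor
          · rintro ⟨h2, h0', hlt⟩
            refine ⟨h2, h0', ?_⟩
            have : e.1 1 ≠ m 1 := fun hq => hne ⟨h2, h0', hq⟩
            omega
          · rintro ⟨h2, h0', hlt⟩
            exact ⟨h2, h0', by omega⟩
        rw [if_congr hiff rfl rfl, sub_self, if_neg he]
    calc c m - c (m - Pi.single 1 1)
        = (∑ e ∈ z.support, if e.2 = 0 ∧ e.1 0 = m 0 ∧ m 1 - 1 < e.1 1 then z e else 0)
          - ∑ e ∈ z.support, if e.2 = 0 ∧ e.1 0 = m 0 ∧ m 1 < e.1 1 then z e else 0 := by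
          rw [hc]
          simp only [hm0, hm1]
          ring
      _ = ∑ e ∈ z.support, ((if e.2 = 0 ∧ e.1 0 = m 0 ∧ m 1 - 1 < e.1 1 then z e else 0)
            - if e.2 = 0 ∧ e.1 0 = m 0 ∧ m 1 < e.1 1 then z e else 0) := by
          rw [Finset.sum_sub_distrib]
      _ = ∑ e ∈ z.support, if e = (m, (0:Fin 2)) then z e else 0 :=
          Finset.sum_congr rfl fun e _ => key e
      _ = z (m, (0:Fin 2)) := by
          rw [Finset.sum_ite_eq' z.support]
          split_ifs with h
          · rfl
          · exact (Finsupp.notMem_support_iff.mp h).symm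
  -- bounds for the support of c
  set hi : ℤ := ((z.support.sup fun e => (e.1 1).toNat : ℕ) : ℤ) with hhi
  set lo : ℤ := -((z.support.sup fun e => (-(e.1 1)).toNat : ℕ) : ℤ) with hlo
  have hbound : ∀ e ∈ z.support, lo ≤ e.1 1 ∧ e.1 1 ≤ hi := by
    intro e he
    constructor
    · have h1 : -(e.1 1) ≤ (((-(e.1 1)).toNat : ℕ) : ℤ) := Int.self_le_toNat _
      have h2 : ((-(e.1 1)).toNat : ℕ) ≤ (z.support.sup fun e => (-(e.1 1)).toNat) :=
        Finset.le_sup (f := fun e => (-(e.1 1)).toNat) he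
      rw [hlo]
      have h3 := Int.ofNat_le.mpr h2
      omega
    · have h1 : e.1 1 ≤ (((e.1 1).toNat : ℕ) : ℤ) := Int.self_le_toNat _
      have h2 : ((e.1 1).toNat : ℕ) ≤ (z.support.sup fun e => (e.1 1).toNat) :=
        Finset.le_sup (f := fun e => (e.1 1).toNat) he
      rw [hhi]
      have h3 := Int.ofNat_le.mpr h2
      omega
  -- support of c is contained in a finite set
  set S : Finset Z2 :=
    ((z.support.image fun e => e.1 0) ×ˢ Finset.Icc lo hi).image
      (fun q => fun j : Fin 2 => if j = 0 then q.1 else q.2) with hS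
  have hsupp : ∀ m : Z2, c m ≠ 0 → m ∈ S := by
    intro m hm
    -- there is an edge strictly above m in the same column
    have hex : ∃ e ∈ z.support, e.2 = 0 ∧ e.1 0 = m 0 ∧ m 1 < e.1 1 := by
      by_contra hcon
      push_neg at hcon
      apply hm
      rw [hc]
      rw [neg_eq_zero]
      apply Finset.sum_eq_zero
      intro e he
      rw [if_neg]
      rintro ⟨h2, h0', hlt⟩
      exact absurd hlt (not_lt.mpr (hcon e he h2 h0'))
    -- there is an edge at or below m in the same column (column sums vanish)
    have hcol := col_sum z hz (m 0)
    rw [Finsupp.sum] at hcol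
    have hsplit : ∀ e : Z2 × Fin 2,
        (if e.2 = 0 ∧ e.1 0 = m 0 then z e else 0)
        = (if e.2 = 0 ∧ e.1 0 = m 0 ∧ m 1 < e.1 1 then z e else 0)
          + (if e.2 = 0 ∧ e.1 0 = m 0 ∧ ¬(m 1 < e.1 1) then z e else 0) := by
      intro e
      by_cases h1 : e.2 = 0 ∧ e.1 0 = m 0
      · by_cases h2 : m 1 < e.1 1
        · rw [if_pos h1, if_pos ⟨h1.1, h1.2, h2⟩, if_neg (fun h => h.2.2 h2), add_zero]
        · rw [if_pos h1, if_neg (fun h => h2 h.2.2), if_pos ⟨h1.1, h1.2, h2⟩, zero_add]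
      · rw [if_neg h1, if_neg (fun h => h1 ⟨h.1, h.2.1⟩), if_neg (fun h => h1 ⟨h.1, h.2.1⟩),
          add_zero]
    rw [Finset.sum_congr rfl (fun e _ => hsplit e), Finset.sum_add_distrib] at hcol
    have hex2 : ∃ e' ∈ z.support, e'.2 = 0 ∧ e'.1 0 = m 0 ∧ ¬(m 1 < e'.1 1) := by
      by_contra hcon
      push_neg at hcon
      apply hm
      rw [hc, neg_eq_zero]
      have hzero : (∑ e ∈ z.support,
          if e.2 = 0 ∧ e.1 0 = m 0 ∧ ¬(m 1 < e.1 1) then z e else 0) = 0 := by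
        apply Finset.sum_eq_zero
        intro e he
        rw [if_neg]
        rintro ⟨h2, h0', hlt⟩
        exact absurd hlt (not_not.mpr (hcon e he h2 h0'))
      rw [hzero, add_zero] at hcol
      exact hcol
    obtain ⟨e, he, he2, he0, helt⟩ := hex
    obtain ⟨e', he', he'2, he'0, he'le⟩ := hex2
    rw [hS]
    apply Finset.mem_image.mpr
    refine ⟨(m 0, m 1), Finset.mem_product.mpr ⟨?_, ?_⟩, ?_⟩
    · exact Finset.mem_image.mpr ⟨e, he, he0⟩
    · apply Finset.mem_Icc.mpr
      constructor
      · exact le_trans (hbound e' he').1 (not_lt.mp he'le)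
      · exact le_trans (le_of_lt helt) (hbound e he).2
    · funext j
      fin_cases j <;> simp
  -- the finitely supported potential
  set C : Z2 →₀ ℤ := Finsupp.onFinset S c hsupp with hC
  have hCc : ∀ m : Z2, C m = c m := fun m => rfl
  set w : C1Z2 := Finsupp.linearCombination ℤ plaq2 C with hw
  have hw0 : ∀ x : Z2, w (x, (0:Fin 2)) = z (x, (0:Fin 2)) := by
    intro x
    rw [hw, lc_apply0, hCc, hCc]
    exact htel x
  set v : C1Z2 := z - w with hv
  have hbw : bdL w = 0 := by
    rw [hw, Finsupp.linearCombination_apply, map_finsuppSum, Finsupp.sum]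
    apply Finset.sum_eq_zero
    intro m _
    rw [map_smul, bdL_plaq, smul_zero]
  have hbv : bdL v = 0 := by rw [hv, map_sub, hz, hbw, sub_zero]
  have hv0 : ∀ x : Z2, v (x, (0:Fin 2)) = 0 := by
    intro x
    rw [hv, Finsupp.sub_apply, hw0, sub_self]
  have hv1 : ∀ x : Z2, v (x, (1:Fin 2)) = 0 := by
    apply shift_vanish (fun x => v (x, (1:Fin 2))) (v.support.image Prod.fst)
    · intro x hx
      exact Finset.mem_image.mpr ⟨(x, 1), Finsupp.mem_support_iff.mpr hx, rfl⟩
    · intro x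
      have h := bdL_apply v (x + Pi.single 1 1)
      rw [hbv] at h
      simp only [Finsupp.coe_zero, Pi.zero_apply] at h
      rw [hv0, hv0, add_sub_cancel_right] at h
      omega
  have hvz : v = 0 := by
    ext p
    obtain ⟨x, i⟩ := p
    fin_cases i
    · exact hv0 x
    · exact hv1 x
  have hzw : z = w := by
    have := sub_eq_zero.mp hvz
    exact this
  rw [hzw, hw]
  apply Finsupp.mem_span_range_iff_exists_finsupp.mpr
  exact ⟨C, (Finsupp.linearCombination_apply (v := plaq2) ℤ C).symm⟩

/-- For `d = 2` the plaquettes `(p(m))_{m ∈ ℤ²}` form a basis of the free abelian group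
`Z_1(ℤ²) = H_1(E²)`: they are `ℤ`-linearly independent and they span the cycle group. -/
theorem plaquettes_basis :
    LinearIndependent ℤ plaq2 ∧
    Submodule.span ℤ (Set.range plaq2) = LinearMap.ker bdL := by
  constructor
  · rw [linearIndependent_iff]
    intro l hl
    ext x
    refine shift_vanish (fun x => l x) l.support (fun x hx => Finsupp.mem_support_iff.mpr hx)
      ?_ x
    intro y
    have h := lc_apply0 l (y + Pi.single 1 1)
    rw [hl, add_sub_cancel_right] at h
    simp only [Finsupp.coe_zero, Pi.zero_apply] at h
    show l y = l (y + Pi.single 1 1)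
    omega
  · apply le_antisymm
    · rw [Submodule.span_le]
      rintro _ ⟨m, rfl⟩
      exact LinearMap.mem_ker.mpr (bdL_plaq m)
    · intro z hz
      exact ker_le_span z (LinearMap.mem_ker.mp hz)
end

section
/- Let M be the smallest normal subgroup of Met_k(2) containing z^k. Then N/M is isomorphic to the direct sum ⊕_{ℤ²} ℤ/|k|ℤ (finitely supported functions ℤ² → ℤ/|k|ℤ), and Met_k(2)/M is isomorphic to the semidirect product (⊕_{ℤ²} ℤ/|k|ℤ) ⋊ ℤ², where ℤ² acts on ⊕_{ℤ²} ℤ/|k|ℤ by translating the index; under this isomorphism the images of x and y correspond to the standard generators e_1 and e_2 of the ℤ² factor and the image of z corresponds to the generator supported at the origin. -/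
/-- The free generators `x, y, z` of the presentation of `Met_k(2)`. -/
def xg : FreeGroup (Fin 3) := FreeGroup.of 0
def yg : FreeGroup (Fin 3) := FreeGroup.of 1
def zg : FreeGroup (Fin 3) := FreeGroup.of 2

/-- The word `x^m y^n` in the free group. -/
def wmn (m n : ℤ) : FreeGroup (Fin 3) := xg ^ m * yg ^ n

open scoped commutatorElement

/-- The relators of `Met_k(2)`: `[x,y] z^{-k}` (i.e. `[x,y] = z^k`) and
`[w z w⁻¹, w' z w'⁻¹]` for all `w = x^m y^n`, `w' = x^{m'} y^{n'}` (all such conjugates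
of `z` commute). -/
def metRels (k : ℤ) : Set (FreeGroup (Fin 3)) :=
  {r | r = ⁅xg, yg⁆ * zg ^ (-k) ∨
    ∃ m n m' n' : ℤ,
      r = ⁅wmn m n * zg * (wmn m n)⁻¹, wmn m' n' * zg * (wmn m' n')⁻¹⁆}

/-- The group `Met_k(2)`, presented by generators `x, y, z` and the above relations. -/
abbrev Met2 (k : ℤ) : Type := PresentedGroup (metRels k)

/-- The generator `x` of `Met_k(2)`. -/
def X (k : ℤ) : Met2 k := PresentedGroup.of 0
/-- The generator `y` of `Met_k(2)`. -/
def Y (k : ℤ) : Met2 k := PresentedGroup.of 1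
/-- The generator `z` of `Met_k(2)`. -/
def Z (k : ℤ) : Met2 k := PresentedGroup.of 2

/-- `N`: the smallest normal subgroup of `Met_k(2)` containing `z`. -/
def Nsub (k : ℤ) : Subgroup (Met2 k) := Subgroup.normalClosure {Z k}

instance (k : ℤ) : (Nsub k).Normal := Subgroup.normalClosure_normal

/-- `⊕_{ℤ²} ℤ/|k|ℤ`: finitely supported functions `ℤ² → ℤ/|k|ℤ` (with `ℤ/0ℤ = ℤ`). -/
abbrev Wk (k : ℤ) : Type := (Fin 2 → ℤ) →₀ ZMod k.natAbs

/-- Translation of the index by `v ∈ ℤ²`. -/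
noncomputable def translW (k : ℤ) (v : Fin 2 → ℤ) : Wk k ≃+ Wk k :=
  Finsupp.domCongr (Equiv.addLeft v)

/-- The action of `ℤ²` on `⊕_{ℤ²} ℤ/|k|ℤ` by translations of the index. -/
noncomputable def actW (k : ℤ) :
    Multiplicative (Fin 2 → ℤ) →* MulAut (Multiplicative (Wk k)) :=
  MonoidHom.mk' (fun v => AddEquiv.toMultiplicative (translW k v.toAdd))
    (by
      intro a b
      ext w
      simp [translW, Finsupp.domCongr_apply, Equiv.Perm.mul_def,
        Finsupp.equivMapDomain_trans])

/-- `M`: the smallest normal subgroup of `Met_k(2)` containing `z^k`. -/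
def Msub (k : ℤ) : Subgroup (Met2 k) := Subgroup.normalClosure {Z k ^ k}

instance (k : ℤ) : (Msub k).Normal := Subgroup.normalClosure_normal

----------------------------------------------------------------
-- auxiliary development
----------------------------------------------------------------

section Aux

variable (k : ℤ)

lemma pi_zsmul_single (i : Fin 2) (m : ℤ) :
    m • (Pi.single i (1:ℤ) : Fin 2 → ℤ) = Pi.single i m := by
  funext j
  by_cases h : j = i <;> simp [Pi.single_apply, h]

/-- the vector (m,n) -/
def vmn (m n : ℤ) : Fin 2 → ℤ := Pi.single 0 m + Pi.single 1 n

lemma vmn_eta (u : Fin 2 → ℤ) : vmn (u 0) (u 1) = u := by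
  funext j
  fin_cases j <;> simp [vmn, Pi.single_apply]

lemma translW_single (v u : Fin 2 → ℤ) (c : ZMod k.natAbs) :
    translW k v (Finsupp.single u c) = Finsupp.single (v + u) c := by
  simp [translW, Finsupp.domCongr_apply, Finsupp.equivMapDomain_single]

lemma actW_apply (v : Fin 2 → ℤ) (w : Wk k) :
    actW k (Multiplicative.ofAdd v) (Multiplicative.ofAdd w)
      = Multiplicative.ofAdd (translW k v w) := rfl

lemma intCast_natAbs_dvd_zero {j : ℤ} (h : k ∣ j) : ((j : ℤ) : ZMod k.natAbs) = 0 := by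
  rw [ZMod.intCast_zmod_eq_zero_iff_dvd]
  exact (Int.natAbs_dvd).2 h

noncomputable abbrev SDP := SemidirectProduct (Multiplicative (Wk k))
  (Multiplicative (Fin 2 → ℤ)) (actW k)

open SemidirectProduct Multiplicative

/-- images of the generators -/
noncomputable def fgen : Fin 3 → SDP k :=
  ![inr (ofAdd (Pi.single 0 1)), inr (ofAdd (Pi.single 1 1)),
    inl (ofAdd (Finsupp.single (0 : Fin 2 → ℤ) (1 : ZMod k.natAbs)))]

lemma ofAdd_psingle_zpow (i : Fin 2) (m : ℤ) :
    (ofAdd (Pi.single i (1:ℤ) : Fin 2 → ℤ)) ^ m = ofAdd (Pi.single i m : Fin 2 → ℤ) := by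
  rw [← ofAdd_zsmul, pi_zsmul_single]

lemma inr_psingle_zpow (i : Fin 2) (m : ℤ) :
    (inr (ofAdd (Pi.single i (1:ℤ) : Fin 2 → ℤ)) : SDP k) ^ m
      = inr (ofAdd (Pi.single i m : Fin 2 → ℤ)) := by
  conv_rhs => rw [← ofAdd_psingle_zpow]
  rw [map_zpow]

lemma ofAdd_fsingle_zpow (u : Fin 2 → ℤ) (j : ℤ) :
    (ofAdd (Finsupp.single u (1 : ZMod k.natAbs))) ^ j
      = ofAdd (Finsupp.single u ((j : ℤ) : ZMod k.natAbs)) := by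
  rw [← ofAdd_zsmul, Finsupp.smul_single, zsmul_eq_mul, mul_one]

lemma lift_wmn (m n : ℤ) :
    FreeGroup.lift (fgen k) (wmn m n) = inr (ofAdd (vmn m n)) := by
  have h0 : FreeGroup.lift (fgen k) xg = inr (ofAdd (Pi.single 0 (1:ℤ))) := by
    simp [xg, fgen]
  have h1 : FreeGroup.lift (fgen k) yg = inr (ofAdd (Pi.single 1 (1:ℤ))) := by
    simp [yg, fgen]
  rw [wmn, map_mul, map_zpow, map_zpow, h0, h1, inr_psingle_zpow, inr_psingle_zpow,
    ← map_mul, ← ofAdd_add]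
  rfl

lemma inl_single_zpow (u : Fin 2 → ℤ) (j : ℤ) :
    (inl (ofAdd (Finsupp.single u (1 : ZMod k.natAbs))) : SDP k) ^ j
      = inl (ofAdd (Finsupp.single u ((j : ℤ) : ZMod k.natAbs))) := by
  conv_rhs => rw [← ofAdd_fsingle_zpow]
  rw [map_zpow]

lemma lift_conj (m n : ℤ) :
    FreeGroup.lift (fgen k) (wmn m n * zg * (wmn m n)⁻¹)
      = inl (ofAdd (Finsupp.single (vmn m n) (1 : ZMod k.natAbs))) := by
  have h2 : FreeGroup.lift (fgen k) zg
      = inl (ofAdd (Finsupp.single (0 : Fin 2 → ℤ) (1 : ZMod k.natAbs))) := by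
    simp [zg, fgen]
  rw [map_mul, map_mul, map_inv, lift_wmn, h2, ← map_inv, ← inl_aut, actW_apply,
    translW_single, add_zero]

lemma hrels : ∀ r ∈ metRels k, FreeGroup.lift (fgen k) r = 1 := by
  intro r hr
  rcases hr with h | ⟨m, n, m', n', h⟩
  · subst h
    rw [map_mul, map_commutatorElement, map_zpow]
    have hx : FreeGroup.lift (fgen k) xg = inr (ofAdd (Pi.single 0 (1:ℤ))) := by
      simp [xg, fgen]
    have hy : FreeGroup.lift (fgen k) yg = inr (ofAdd (Pi.single 1 (1:ℤ))) := by
      simp [yg, fgen]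
    have hz : FreeGroup.lift (fgen k) zg
        = inl (ofAdd (Finsupp.single (0 : Fin 2 → ℤ) (1 : ZMod k.natAbs))) := by
      simp [zg, fgen]
    rw [hx, hy, hz, inl_single_zpow, intCast_natAbs_dvd_zero k (dvd_neg.2 dvd_rfl),
      ((Commute.all _ _).map
        (SemidirectProduct.inr : Multiplicative (Fin 2 → ℤ) →* SDP k)).commutator_eq,
      one_mul]
    simp
  · subst h
    rw [map_commutatorElement, lift_conj, lift_conj,
      ((Commute.all _ _).map
        (SemidirectProduct.inl : Multiplicative (Wk k) →* SDP k)).commutator_eq]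

/-- The homomorphism θ -/
noncomputable def theta : Met2 k →* SDP k := PresentedGroup.toGroup (hrels k)

lemma theta_X : theta k (X k) = inr (ofAdd (Pi.single 0 (1:ℤ))) :=
  PresentedGroup.toGroup.of (hrels k)
lemma theta_Y : theta k (Y k) = inr (ofAdd (Pi.single 1 (1:ℤ))) :=
  PresentedGroup.toGroup.of (hrels k)
lemma theta_Z : theta k (Z k)
    = inl (ofAdd (Finsupp.single (0 : Fin 2 → ℤ) (1 : ZMod k.natAbs))) :=
  PresentedGroup.toGroup.of (hrels k)

lemma pgmk_eq_one {r : FreeGroup (Fin 3)} (hr : r ∈ metRels k) :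
    PresentedGroup.mk (metRels k) r = 1 := by
  have : r ∈ Subgroup.normalClosure (metRels k) := Subgroup.subset_normalClosure hr
  exact (QuotientGroup.eq_one_iff r).2 this

def Wmet (m n : ℤ) : Met2 k := X k ^ m * Y k ^ n

lemma mk_wmn (m n : ℤ) : PresentedGroup.mk (metRels k) (wmn m n) = Wmet k m n := by
  rw [wmn, map_mul, map_zpow, map_zpow]; rfl

/-- relation 1 in Met2 -/
lemma rel1 : ⁅X k, Y k⁆ = Z k ^ k := by
  have h := pgmk_eq_one k (Or.inl rfl : (⁅xg, yg⁆ * zg ^ (-k)) ∈ metRels k)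
  rw [map_mul, map_commutatorElement, map_zpow, zpow_neg, mul_inv_eq_one] at h
  exact h

/-- relation 2 in Met2 -/
lemma rel2 (m n m' n' : ℤ) :
    Commute (Wmet k m n * Z k * (Wmet k m n)⁻¹) (Wmet k m' n' * Z k * (Wmet k m' n')⁻¹) := by
  have h := pgmk_eq_one k (Or.inr ⟨m, n, m', n', rfl⟩ :
    (⁅wmn m n * zg * (wmn m n)⁻¹, wmn m' n' * zg * (wmn m' n')⁻¹⁆) ∈ metRels k)
  rw [map_commutatorElement] at h
  rw [map_mul, map_mul, map_inv, mk_wmn, map_mul, map_mul, map_inv, mk_wmn] at h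
  exact commutatorElement_eq_one_iff_commute.1 h

lemma theta_Wmet (m n : ℤ) : theta k (Wmet k m n) = inr (ofAdd (vmn m n)) := by
  rw [Wmet, map_mul, map_zpow, map_zpow, theta_X, theta_Y, inr_psingle_zpow,
    inr_psingle_zpow, ← map_mul, ← ofAdd_add]
  rfl

lemma theta_conj (m n j : ℤ) :
    theta k (Wmet k m n * Z k ^ j * (Wmet k m n)⁻¹)
      = inl (ofAdd (Finsupp.single (vmn m n) ((j : ℤ) : ZMod k.natAbs))) := by
  rw [map_mul, map_mul, map_inv, map_zpow, theta_Wmet, theta_Z, inl_single_zpow,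
    ← map_inv, ← inl_aut, actW_apply, translW_single, add_zero]

end Aux

----------------------------------------------------------------
-- the quotient Q = Met2 k / Msub k and the inverse homomorphism
----------------------------------------------------------------

section Quot

open Multiplicative SemidirectProduct

variable (k : ℤ)

abbrev Qk := Met2 k ⧸ Msub k

def piQ : Met2 k →* Qk k := QuotientGroup.mk' (Msub k)

lemma piQ_zk : piQ k (Z k ^ k) = 1 :=
  (QuotientGroup.eq_one_iff _).2 (Subgroup.subset_normalClosure rfl)

lemma commQ_XY : Commute (piQ k (X k)) (piQ k (Y k)) := by
  have h : piQ k ⁅X k, Y k⁆ = 1 := by rw [rel1]; exact piQ_zk k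
  rw [map_commutatorElement] at h
  exact commutatorElement_eq_one_iff_commute.1 h

noncomputable def phig : Multiplicative (Fin 2 → ℤ) →* Qk k :=
  MonoidHom.mk' (fun v => piQ k (X k) ^ (v.toAdd 0) * piQ k (Y k) ^ (v.toAdd 1))
    (by
      intro a b
      simp only [toAdd_mul, Pi.add_apply, zpow_add]
      exact ((commQ_XY k).zpow_zpow (b.toAdd 0) (a.toAdd 1)).mul_mul_mul_comm _ _)

lemma phig_ofAdd (v : Fin 2 → ℤ) :
    phig k (ofAdd v) = piQ k (X k) ^ (v 0) * piQ k (Y k) ^ (v 1) := rfl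

noncomputable def zc (u : Fin 2 → ℤ) : Qk k :=
  phig k (ofAdd u) * piQ k (Z k) * (phig k (ofAdd u))⁻¹

lemma zc_eq (m n : ℤ) :
    zc k (vmn m n) = piQ k (Wmet k m n * Z k * (Wmet k m n)⁻¹) := by
  have h : phig k (ofAdd (vmn m n)) = piQ k (Wmet k m n) := by
    rw [phig_ofAdd, Wmet, map_mul, map_zpow, map_zpow]
    congr 1 <;> congr 1 <;> simp [vmn, Pi.single_apply]
  rw [zc, h, map_mul, map_mul, map_inv]

lemma zc_comm (u u' : Fin 2 → ℤ) : Commute (zc k u) (zc k u') := by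
  have h := (rel2 k (u 0) (u 1) (u' 0) (u' 1)).map (piQ k)
  rw [← vmn_eta u, ← vmn_eta u', zc_eq, zc_eq]
  simpa using h

lemma zc_zero : zc k 0 = piQ k (Z k) := by
  rw [zc]
  have : phig k (ofAdd (0 : Fin 2 → ℤ)) = 1 := by
    rw [phig_ofAdd]; simp
  rw [this, one_mul, inv_one, mul_one]

lemma zc_conj (v u : Fin 2 → ℤ) :
    phig k (ofAdd v) * zc k u * (phig k (ofAdd v))⁻¹ = zc k (v + u) := by
  simp only [zc, ofAdd_add, map_mul]
  group

lemma zc_zpow_k (u : Fin 2 → ℤ) : zc k u ^ k = 1 := by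
  rw [zc, conj_zpow, ← map_zpow, piQ_zk, mul_one, mul_inv_cancel]

lemma zc_natAbs (u : Fin 2 → ℤ) : zc k u ^ ((k.natAbs : ℤ)) = 1 := by
  rcases Int.natAbs_eq k with h | h
  · rw [← h]; exact zc_zpow_k k u
  · have h2 : zc k u ^ (-(k.natAbs : ℤ)) = 1 := by rw [← h]; exact zc_zpow_k k u
    rw [zpow_neg, inv_eq_one] at h2
    exact h2

/-- the subgroup of `Q` generated by the conjugates of `z` -/
noncomputable def Asub : Subgroup (Qk k) := Subgroup.closure (Set.range (zc k))

noncomputable instance instCommA : CommGroup (Asub k) :=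
  Subgroup.closureCommGroupOfComm (by
    rintro _ ⟨u, rfl⟩ _ ⟨u', rfl⟩
    exact (zc_comm k u u').eq)

noncomputable def zcA (u : Fin 2 → ℤ) : Asub k :=
  ⟨zc k u, Subgroup.subset_closure ⟨u, rfl⟩⟩

lemma zcA_natAbs (u : Fin 2 → ℤ) : zcA k u ^ ((k.natAbs : ℤ)) = 1 := by
  apply Subtype.ext
  rw [SubgroupClass.coe_zpow]
  exact zc_natAbs k u

noncomputable def eHom (u : Fin 2 → ℤ) : ZMod k.natAbs →+ Additive (Asub k) :=
  ZMod.lift k.natAbs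
    ⟨AddMonoidHom.mk' (fun j => Additive.ofMul (zcA k u ^ j))
      (by
        intro a b
        show Additive.ofMul (zcA k u ^ (a + b)) = _
        rw [zpow_add]
        rfl),
     by
      show Additive.ofMul (zcA k u ^ ((k.natAbs : ℤ))) = 0
      rw [zcA_natAbs]; rfl⟩

lemma eHom_intCast (u : Fin 2 → ℤ) (j : ℤ) :
    ((eHom k u ((j : ℤ) : ZMod k.natAbs)).toMul : Qk k) = zc k u ^ j := by
  rw [eHom, ZMod.lift_coe]
  show ((zcA k u ^ j : Asub k) : Qk k) = zc k u ^ j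
  rw [SubgroupClass.coe_zpow]
  rfl

noncomputable def PhiHom : Wk k →+ Additive (Asub k) := Finsupp.liftAddHom (eHom k)

noncomputable def phin : Multiplicative (Wk k) →* Qk k :=
  MonoidHom.mk' (fun (w : Multiplicative (Wk k)) => (((PhiHom k w.toAdd).toMul : Asub k) : Qk k))
    (by
      intro a b
      show (((PhiHom k (a * b).toAdd).toMul : Asub k) : Qk k) = _
      rw [toAdd_mul, map_add]
      rfl)

lemma phin_single_int (u : Fin 2 → ℤ) (j : ℤ) :
    phin k (ofAdd (Finsupp.single u ((j : ℤ) : ZMod k.natAbs))) = zc k u ^ j := by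
  show (((PhiHom k ((ofAdd (Finsupp.single u ((j : ℤ) : ZMod k.natAbs))).toAdd)).toMul
      : Asub k) : Qk k) = _
  rw [toAdd_ofAdd, PhiHom]
  erw [Finsupp.liftAddHom_apply_single]
  exact eHom_intCast k u j

lemma compat : ∀ g, (phin k).comp ((actW k) g).toMonoidHom
    = (MulAut.conj (phig k g)).toMonoidHom.comp (phin k) := by
  intro g
  have hsingle : ∀ (u : Fin 2 → ℤ) (c : ZMod k.natAbs),
      phin k (ofAdd (translW k g.toAdd (Finsupp.single u c)))
        = phig k g * phin k (ofAdd (Finsupp.single u c)) * (phig k g)⁻¹ := by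
    intro u c
    obtain ⟨j, rfl⟩ := ZMod.intCast_surjective c
    rw [translW_single, phin_single_int, phin_single_int]
    have h := zc_conj k g.toAdd u
    rw [ofAdd_toAdd] at h
    rw [← h, conj_zpow]
  have key : ∀ w' : Wk k,
      phin k (actW k g (ofAdd w')) = phig k g * phin k (ofAdd w') * (phig k g)⁻¹ := by
    intro w'
    have hact : ∀ w'' : Wk k, actW k g (ofAdd w'') = ofAdd (translW k g.toAdd w'') := by
      intro w''
      rw [← actW_apply k g.toAdd w'', ofAdd_toAdd]
    induction w' using Finsupp.induction with
    | zero =>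
      rw [hact, map_zero]
      simp
    | single_add u c f _ _ ih =>
      rw [hact] at ih ⊢
      rw [map_add, ofAdd_add, map_mul, ofAdd_add, map_mul, ih, hsingle]
      group
  refine MonoidHom.ext fun w => ?_
  simp only [MonoidHom.comp_apply, MulEquiv.coe_toMonoidHom, MulAut.conj_apply]
  have hw := key w.toAdd
  rw [ofAdd_toAdd] at hw
  exact hw

noncomputable def psi : SDP k →* Qk k := SemidirectProduct.lift (phin k) (phig k) (compat k)

lemma hMle : Msub k ≤ (theta k).ker := by
  apply Subgroup.normalClosure_le_normal
  intro x hx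
  rw [Set.mem_singleton_iff] at hx
  subst hx
  show theta k (Z k ^ k) = 1
  rw [map_zpow, theta_Z, inl_single_zpow, intCast_natAbs_dvd_zero k dvd_rfl]
  simp

lemma psi_theta : ∀ g : Met2 k, psi k (theta k g) = piQ k g := by
  have h : (psi k).comp (theta k) = piQ k := by
    apply PresentedGroup.ext
    intro i
    fin_cases i
    · show psi k (theta k (X k)) = piQ k (X k)
      rw [theta_X]
      show psi k (inr (ofAdd (Pi.single 0 (1:ℤ)))) = _
      rw [psi, SemidirectProduct.lift_inr, phig_ofAdd]
      simp [Pi.single_apply]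
    · show psi k (theta k (Y k)) = piQ k (Y k)
      rw [theta_Y]
      show psi k (inr (ofAdd (Pi.single 1 (1:ℤ)))) = _
      rw [psi, SemidirectProduct.lift_inr, phig_ofAdd]
      simp [Pi.single_apply]
    · show psi k (theta k (Z k)) = piQ k (Z k)
      rw [theta_Z]
      show psi k (inl (ofAdd (Finsupp.single (0 : Fin 2 → ℤ) (1 : ZMod k.natAbs)))) = _
      rw [psi, SemidirectProduct.lift_inl]
      have h1 : ((1 : ZMod k.natAbs)) = (((1:ℤ) : ZMod k.natAbs)) := by norm_num
      rw [h1, phin_single_int, zpow_one, zc_zero]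
  intro g
  exact DFunLike.congr_fun h g

lemma theta_ker : (theta k).ker = Msub k := by
  apply le_antisymm _ (hMle k)
  intro g hg
  have h1 : piQ k g = 1 := by
    rw [← psi_theta, MonoidHom.mem_ker.1 hg, map_one]
  exact (QuotientGroup.eq_one_iff g).1 h1

lemma inl_mem_range (w : Wk k) : inl (ofAdd w) ∈ (theta k).range := by
  induction w using Finsupp.induction with
  | zero => exact ⟨1, by simp⟩
  | single_add u c f _ _ ih =>
    have hu : (inl (ofAdd (Finsupp.single u c)) : SDP k) ∈ (theta k).range := by
      obtain ⟨j, rfl⟩ := ZMod.intCast_surjective c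
      exact ⟨Wmet k (u 0) (u 1) * Z k ^ j * (Wmet k (u 0) (u 1))⁻¹,
        by rw [theta_conj, vmn_eta]⟩
    have : (inl (ofAdd (Finsupp.single u c + f)) : SDP k)
        = inl (ofAdd (Finsupp.single u c)) * inl (ofAdd f) := by
      rw [← map_mul, ← ofAdd_add]
    rw [this]
    exact mul_mem hu ih

lemma theta_surj : Function.Surjective (theta k) := by
  intro s
  have hs : s ∈ (theta k).range := by
    rw [← inl_left_mul_inr_right s]
    refine mul_mem ?_ ?_
    · have := inl_mem_range k (s.left.toAdd)
      rwa [ofAdd_toAdd] at this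
    · refine ⟨Wmet k (s.right.toAdd 0) (s.right.toAdd 1), ?_⟩
      rw [theta_Wmet, vmn_eta, ofAdd_toAdd]
  exact hs

end Quot

----------------------------------------------------------------
-- the homomorphism N → ⊕ ℤ/|k|ℤ
----------------------------------------------------------------

section Fpart

open Multiplicative SemidirectProduct

variable (k : ℤ)

lemma right_theta_one : ∀ g ∈ Nsub k, (theta k g).right = 1 := by
  have hle : Nsub k ≤ ((rightHom).comp (theta k)).ker := by
    apply Subgroup.normalClosure_le_normal
    intro x hx
    rw [Set.mem_singleton_iff] at hx
    subst hx
    show rightHom (theta k (Z k)) = 1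
    rw [theta_Z, rightHom_inl]
  intro g hg
  have h := hle hg
  rw [MonoidHom.mem_ker, MonoidHom.comp_apply] at h
  exact h

noncomputable def fN : (Nsub k) →* Multiplicative (Wk k) :=
  MonoidHom.mk' (fun n => (theta k ↑n).left)
    (by
      intro a b
      show (theta k (↑a * ↑b)).left = _
      rw [map_mul, mul_left, right_theta_one k ↑a a.2, map_one, MulAut.one_apply])

lemma fN_ker : (fN k).ker = (Msub k).subgroupOf (Nsub k) := by
  ext n
  rw [MonoidHom.mem_ker, Subgroup.mem_subgroupOf]
  constructor
  · intro h
    have hr := right_theta_one k ↑n n.2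
    have h2 : theta k ↑n = 1 := by
      refine SemidirectProduct.ext ?_ ?_
      · show (theta k ↑n).left = (1 : SDP k).left
        rw [show ((fN k) n) = (theta k ↑n).left from rfl] at h
        rw [h]; rfl
      · rw [hr]; rfl
    have h3 : (↑n : Met2 k) ∈ (theta k).ker := MonoidHom.mem_ker.2 h2
    rwa [theta_ker] at h3
  · intro h
    have h2 : theta k ↑n = 1 := MonoidHom.mem_ker.1 ((theta_ker k) ▸ h)
    show (theta k ↑n).left = 1
    rw [h2]; rfl

lemma single_mem_range (u : Fin 2 → ℤ) (j : ℤ) :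
    ofAdd (Finsupp.single u ((j : ℤ) : ZMod k.natAbs)) ∈ (fN k).range := by
  have hZ : Z k ∈ Nsub k := Subgroup.subset_normalClosure rfl
  have hmem : Wmet k (u 0) (u 1) * Z k ^ j * (Wmet k (u 0) (u 1))⁻¹ ∈ Nsub k :=
    (inferInstance : (Nsub k).Normal).conj_mem _ (Subgroup.zpow_mem _ hZ j) _
  refine ⟨⟨_, hmem⟩, ?_⟩
  show (theta k (Wmet k (u 0) (u 1) * Z k ^ j * (Wmet k (u 0) (u 1))⁻¹)).left = _
  rw [theta_conj, vmn_eta]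
  rfl

lemma fN_surj : Function.Surjective (fN k) := by
  have hall : ∀ w : Wk k, ofAdd w ∈ (fN k).range := by
    intro w
    induction w using Finsupp.induction with
    | zero => exact ⟨1, by rw [map_one]; rfl⟩
    | single_add u c f _ _ ih =>
      obtain ⟨j, rfl⟩ := ZMod.intCast_surjective c
      have h1 := single_mem_range k u j
      rw [show (ofAdd (Finsupp.single u ((j : ℤ) : ZMod k.natAbs) + f))
          = ofAdd (Finsupp.single u ((j : ℤ) : ZMod k.natAbs)) * ofAdd f from rfl]
      exact mul_mem h1 ih
  intro w
  obtain ⟨n, hn⟩ := hall w.toAdd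
  exact ⟨n, by rw [hn, ofAdd_toAdd]⟩

end Fpart


/-- `N/M ≅ ⊕_{ℤ²} ℤ/|k|ℤ`, and `Met_k(2)/M ≅ (⊕_{ℤ²} ℤ/|k|ℤ) ⋊ ℤ²` (the action by
translation of the index), the isomorphism sending the images of `x`, `y` to the
standard generators `e₁`, `e₂` of the `ℤ²` factor, and the image of `z` to the
generator supported at the origin.  (The isomorphisms of quotients are expressed by
surjective homomorphisms with the corresponding kernels.) -/
theorem quotients_by_M (k : ℤ) :
    (∃ f : (Nsub k) →* Multiplicative (Wk k),
      Function.Surjective f ∧ f.ker = (Msub k).subgroupOf (Nsub k)) ∧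
    ∃ θ : Met2 k →*
        SemidirectProduct (Multiplicative (Wk k)) (Multiplicative (Fin 2 → ℤ)) (actW k),
      Function.Surjective θ ∧ θ.ker = Msub k ∧
      θ (X k) = SemidirectProduct.inr (Multiplicative.ofAdd (Pi.single 0 1)) ∧
      θ (Y k) = SemidirectProduct.inr (Multiplicative.ofAdd (Pi.single 1 1)) ∧
      θ (Z k) = SemidirectProduct.inl
        (Multiplicative.ofAdd (Finsupp.single (0 : Fin 2 → ℤ) (1 : ZMod k.natAbs))) := by
  exact ⟨⟨fN k, fN_surj k, fN_ker k⟩,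
    ⟨theta k, theta_surj k, theta_ker k, theta_X k, theta_Y k, theta_Z k⟩⟩
end

section
/- For a word w ∈ F_d: w lies in the second derived subgroup F_d″ = [F_d′, F_d′] if and only if D(w) = 0 in C_1(ℤ^d). Equivalently, two words w_1, w_2 ∈ F_d represent the same element of the free metabelian group Met(d) = F_d/F_d″ if and only if their paths on the lattice E^d traverse every edge with the same algebraic multiplicity, i.e. D(w_1) = D(w_2). -/
namespace MetPC
open Multiplicative FreeGroup
open scoped commutatorElement

variable {d : ℕ}

lemma shiftZ_single (v m : Zd d) (i : Fin d) (n : ℤ) :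
    shiftZ d v (Finsupp.single (m, i) n) = Finsupp.single (v + m, i) n := by
  simp [shiftZ, Finsupp.mapDomain.addMonoidHom_apply, Finsupp.mapDomain_single]

lemma shiftZ_zero (c : C1Z d) : shiftZ d 0 c = c := by
  simp only [shiftZ, Finsupp.mapDomain.addMonoidHom_apply, zero_add]
  exact Finsupp.mapDomain_id

lemma shiftZ_shiftZ (u v : Zd d) (c : C1Z d) :
    shiftZ d u (shiftZ d v c) = shiftZ d (u + v) c := by
  simp only [shiftZ, Finsupp.mapDomain.addMonoidHom_apply]
  rw [← Finsupp.mapDomain_comp]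
  congr 1
  funext p; simp [add_assoc]

lemma shiftZ_inj (v : Zd d) : Function.Injective (shiftZ d v) := by
  intro a b h
  have h2 := congrArg (shiftZ d (-v)) h
  simpa [shiftZ_shiftZ, shiftZ_zero] using h2

lemma phiZ_of (i : Fin d) : phiZ d (of i) = ofAdd (Pi.single i 1) := by
  simp [phiZ]

/-- helper : product in a multiplicative group -/
lemma list_prod_mult {β : Type*} [AddMonoid β] (l : List (Multiplicative β)) :
    l.prod = ofAdd ((l.map toAdd).sum) := by
  induction l with
  | nil => rfl
  | cons a t ih => simp [ih, ofAdd_add]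

/-- canonical word for `v ∈ ℤ^d` -/
def pcan (v : Zd d) : FreeGroup (Fin d) :=
  ((List.finRange d).map fun i => FreeGroup.of i ^ (v i)).prod

lemma pcan_zero : pcan (0 : Zd d) = 1 := by
  unfold pcan
  simp

lemma phiZ_pcan (v : Zd d) : phiZ d (pcan v) = ofAdd v := by
  unfold pcan
  rw [map_list_prod, List.map_map, list_prod_mult, List.map_map]
  have h : (toAdd ∘ ⇑(phiZ d) ∘ fun i => FreeGroup.of i ^ v i)
      = fun i => Pi.single i (v i) := by
    funext i
    show toAdd (phiZ d (FreeGroup.of i ^ v i)) = Pi.single i (v i)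
    rw [map_zpow, phiZ_of, toAdd_zpow]
    funext j
    by_cases hj : j = i <;> simp [Pi.single_apply, hj]
  rw [h, ← Fin.sum_univ_def, Finset.univ_sum_single]

/-- the loop word attached to an edge -/
def ell (q : Zd d × Fin d) : FreeGroup (Fin d) :=
  pcan q.1 * FreeGroup.of q.2 * (pcan (q.1 + Pi.single q.2 1))⁻¹

lemma ell_mem (q : Zd d × Fin d) : ell q ∈ (phiZ d).ker := by
  rw [MonoidHom.mem_ker, ell, _root_.map_mul, _root_.map_mul, _root_.map_inv, phiZ_pcan, phiZ_of,
    phiZ_pcan, ← ofAdd_add]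
  group

lemma commutator_le_ker : commutator (FreeGroup (Fin d)) ≤ (phiZ d).ker := by
  rw [commutator_def, Subgroup.commutator_le]
  intro g _ h _
  rw [MonoidHom.mem_ker, map_commutatorElement]
  exact commutatorElement_eq_one_iff_mul_comm.mpr (mul_comm _ _)

lemma ker_le_commutator : (phiZ d).ker ≤ commutator (FreeGroup (Fin d)) := by
  classical
  set back : Multiplicative (Zd d) →* Abelianization (FreeGroup (Fin d)) :=
    AddMonoidHom.toMultiplicativeLeft
      { toFun := fun v => ∑ i, v i • Additive.ofMul (Abelianization.of (FreeGroup.of i))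
        map_zero' := by simp
        map_add' := by intro v w; simp [add_smul, Finset.sum_add_distrib] } with hback
  have hcomp : back.comp (phiZ d) = Abelianization.of := by
    apply FreeGroup.ext_hom
    intro i
    show back (phiZ d (of i)) = Abelianization.of (of i)
    rw [phiZ_of]
    have hs : ∑ j, ((Pi.single i 1 : Zd d) j) • Additive.ofMul (Abelianization.of (FreeGroup.of j))
        = Additive.ofMul (Abelianization.of (FreeGroup.of i)) := by
      rw [Finset.sum_eq_single i]
      · simp
      · intro b _ hb; simp [Pi.single_apply, hb]
      · simp
    show Additive.toMul
        ((({ toFun := fun v => ∑ i, v i • Additive.ofMul (Abelianization.of (FreeGroup.of i)),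
             map_zero' := by simp,
             map_add' := by intro v w; simp [add_smul, Finset.sum_add_distrib] } :
          Zd d →+ Additive (Abelianization (FreeGroup (Fin d)))))
          (Multiplicative.toAdd (ofAdd (Pi.single i 1)))) = Abelianization.of (of i)
    simpa using hs
  intro w hw
  have h1 : Abelianization.of w = 1 := by
    rw [← hcomp]
    show back (phiZ d w) = 1
    rw [MonoidHom.mem_ker.mp hw, _root_.map_one]
  exact (QuotientGroup.eq_one_iff w).mp h1

/-- second derived subgroup -/
abbrev Nsub (d : ℕ) : Subgroup (FreeGroup (Fin d)) :=
  ⁅commutator (FreeGroup (Fin d)), commutator (FreeGroup (Fin d))⁆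

/-- image of `ker φ` in `F/F''`; this is an abelian subgroup -/
def Asub (d : ℕ) : Subgroup (FreeGroup (Fin d) ⧸ Nsub d) :=
  Subgroup.map (QuotientGroup.mk' (Nsub d)) (phiZ d).ker

lemma Asub_mul_comm (a b : Asub d) : a * b = b * a := by
  obtain ⟨a, ha⟩ := a
  obtain ⟨b, hb⟩ := b
  obtain ⟨x, hx, rfl⟩ := ha
  obtain ⟨y, hy, rfl⟩ := hb
  have hxy : ⁅x, y⁆ ∈ Nsub d :=
    Subgroup.commutator_mem_commutator (ker_le_commutator hx) (ker_le_commutator hy)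
  have h1 : ⁅(QuotientGroup.mk' (Nsub d)) x, (QuotientGroup.mk' (Nsub d)) y⁆ = 1 := by
    rw [← map_commutatorElement]
    rw [QuotientGroup.mk'_apply]
    exact (QuotientGroup.eq_one_iff _).mpr hxy
  exact Subtype.ext (commutatorElement_eq_one_iff_mul_comm.mp h1)

noncomputable instance : CommGroup (Asub d) :=
  { (inferInstance : Group (Asub d)) with mul_comm := Asub_mul_comm }

lemma ellbar_mem (q : Zd d × Fin d) :
    (QuotientGroup.mk' (Nsub d)) (ell q) ∈ Asub d := ⟨ell q, ell_mem q, rfl⟩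

/-- the additive lift of the loops -/
noncomputable def Jhom (d : ℕ) : C1Z d →+ Additive (Asub d) :=
  Finsupp.liftAddHom fun q =>
    zmultiplesHom _ (Additive.ofMul (⟨_, ellbar_mem q⟩ : Asub d))

noncomputable def Jm (c : C1Z d) : FreeGroup (Fin d) ⧸ Nsub d :=
  ((Additive.toMul (Jhom d c) : Asub d) : FreeGroup (Fin d) ⧸ Nsub d)

lemma Jm_zero : Jm (0 : C1Z d) = 1 := by
  simp [Jm]

lemma Jm_add (c c' : C1Z d) : Jm (c + c') = Jm c * Jm c' := by
  simp only [Jm, map_add]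
  rfl

lemma Jm_neg (c : C1Z d) : Jm (-c) = (Jm c)⁻¹ := by
  simp only [Jm, map_neg]
  rfl

lemma Jm_single (q : Zd d × Fin d) :
    Jm (Finsupp.single q 1) = (QuotientGroup.mk' (Nsub d)) (ell q) := by
  simp only [Jm, Jhom, Finsupp.liftAddHom_apply_single, zmultiplesHom_apply, one_zsmul]
  rfl

section D

variable (D : FreeGroup (Fin d) → C1Z d)
  (hD1 : ∀ i : Fin d, D (FreeGroup.of i) = Finsupp.single ((0 : Zd d), i) 1)
  (hDmul : ∀ u v : FreeGroup (Fin d),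
    D (u * v) = D u + shiftZ d (Multiplicative.toAdd (phiZ d u)) (D v))

include hDmul

lemma D_one : D 1 = 0 := by
  have h := hDmul 1 1
  rw [mul_one] at h
  simp only [_root_.map_one] at h
  rw [show Multiplicative.toAdd (1 : Multiplicative (Zd d)) = 0 from rfl, shiftZ_zero] at h
  exact (left_eq_add.mp h)

lemma D_inv (w : FreeGroup (Fin d)) :
    D w⁻¹ = - shiftZ d (-(Multiplicative.toAdd (phiZ d w))) (D w) := by
  have h := hDmul w w⁻¹
  rw [mul_inv_cancel, D_one D hDmul] at h
  have h2 : shiftZ d (Multiplicative.toAdd (phiZ d w)) (D w⁻¹) = - D w :=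
    eq_neg_of_add_eq_zero_right h.symm
  have h3 := congrArg (shiftZ d (-(Multiplicative.toAdd (phiZ d w)))) h2
  rw [shiftZ_shiftZ, neg_add_cancel, shiftZ_zero, map_neg] at h3
  exact h3

omit hDmul

/-- the coordinate-sum homomorphism -/
noncomputable def Tcoord (i : Fin d) : C1Z d →+ ℤ :=
  Finsupp.liftAddHom fun q => if q.2 = i then AddMonoidHom.id ℤ else 0

lemma Tcoord_single (i : Fin d) (q : Zd d × Fin d) (n : ℤ) :
    Tcoord i (Finsupp.single q n) = if q.2 = i then n else 0 := by
  simp only [Tcoord, Finsupp.liftAddHom_apply_single]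
  by_cases h : q.2 = i <;> simp [h]

lemma Tcoord_shift (i : Fin d) (v : Zd d) (c : C1Z d) :
    Tcoord i (shiftZ d v c) = Tcoord i c := by
  induction c using Finsupp.induction_linear with
  | zero => simp
  | add f g hf hg => rw [map_add, map_add, map_add, hf, hg]
  | single q n => rw [shiftZ_single v q.1 q.2 n, Tcoord_single, Tcoord_single]

include hD1 hDmul

lemma Tcoord_D (w : FreeGroup (Fin d)) (i : Fin d) :
    Tcoord i (D w) = Multiplicative.toAdd (phiZ d w) i := by
  induction w using FreeGroup.induction_on with
  | C1 => rw [D_one D hDmul]; simp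
  | of x =>
      rw [hD1, Tcoord_single,
        phiZ_of, toAdd_ofAdd, Pi.single_apply]
      by_cases h : x = i
      · simp [h]
      · rw [if_neg h, if_neg (fun hh => h hh.symm)]
  | inv_of x hx =>
      rw [D_inv D hDmul, map_neg, Tcoord_shift, hx]
      simp
  | mul u v hu hv =>
      rw [hDmul, map_add, Tcoord_shift, hu, hv]
      simp

lemma phiZ_eq_one_of_D (w : FreeGroup (Fin d)) (hw : D w = 0) : phiZ d w = 1 := by
  have h : ∀ i, Multiplicative.toAdd (phiZ d w) i = 0 := by
    intro i
    rw [← Tcoord_D D hD1 hDmul, hw, map_zero]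
  have h2 : Multiplicative.toAdd (phiZ d w) = 0 := funext h
  rw [← ofAdd_toAdd (phiZ d w), h2, ofAdd_zero]

/-- The key rewriting identity in `F/F''`. -/
lemma KL (w : FreeGroup (Fin d)) :
    (QuotientGroup.mk' (Nsub d)) w
      = Jm (D w) * (QuotientGroup.mk' (Nsub d)) (pcan (Multiplicative.toAdd (phiZ d w))) := by
  classical
  rw [← FreeGroup.mk_toWord (x := w)]
  generalize w.toWord = L
  induction L using List.reverseRecOn with
  | nil =>
      rw [← FreeGroup.one_eq_mk, D_one D hDmul]
      simp [Jm_zero, pcan_zero]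
  | append_singleton L q ih =>
      obtain ⟨i, b⟩ := q
      rw [← FreeGroup.mul_mk]
      cases b
      · -- inverse letter
        rw [show FreeGroup.mk [(i, false)] = (FreeGroup.of i)⁻¹ by
          rw [show (FreeGroup.of i) = FreeGroup.mk [(i,true)] from rfl, FreeGroup.inv_mk]
          rfl]
        have hDof : D (FreeGroup.of i)⁻¹
            = - Finsupp.single ((-Pi.single i 1 : Zd d), i) 1 := by
          rw [D_inv D hDmul, hD1, phiZ_of, toAdd_ofAdd, shiftZ_single, add_zero]
        have hD : D (FreeGroup.mk L * (FreeGroup.of i)⁻¹)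
            = D (FreeGroup.mk L)
              + - Finsupp.single
                  ((Multiplicative.toAdd (phiZ d (FreeGroup.mk L)) + -Pi.single i 1 : Zd d), i)
                  1 := by
          rw [hDmul, hDof, map_neg, shiftZ_single]
        have hphi : Multiplicative.toAdd (phiZ d (FreeGroup.mk L * (FreeGroup.of i)⁻¹))
            = Multiplicative.toAdd (phiZ d (FreeGroup.mk L)) + -Pi.single i 1 := by
          rw [_root_.map_mul, _root_.map_inv, phiZ_of, toAdd_mul, toAdd_inv, toAdd_ofAdd]
        rw [hD, hphi, Jm_add, Jm_neg, Jm_single, _root_.map_mul, ih, _root_.map_inv,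
          mul_assoc, mul_assoc]
        congr 1
        rw [← _root_.map_inv, ← _root_.map_mul, ← _root_.map_inv, ← _root_.map_mul]
        congr 1
        simp only [ell]
        rw [neg_add_cancel_right]
        group
      · -- positive letter
        rw [show FreeGroup.mk [(i, true)] = FreeGroup.of i from rfl]
        have hD : D (FreeGroup.mk L * FreeGroup.of i)
            = D (FreeGroup.mk L)
              + Finsupp.single ((Multiplicative.toAdd (phiZ d (FreeGroup.mk L)) : Zd d), i)
                  1 := by
          rw [hDmul, hD1, shiftZ_single, add_zero]
        have hphi : Multiplicative.toAdd (phiZ d (FreeGroup.mk L * FreeGroup.of i))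
            = Multiplicative.toAdd (phiZ d (FreeGroup.mk L)) + Pi.single i 1 := by
          rw [_root_.map_mul, phiZ_of, toAdd_mul, toAdd_ofAdd]
        rw [hD, hphi, Jm_add, Jm_single, _root_.map_mul, ih, mul_assoc, mul_assoc]
        congr 1
        rw [← _root_.map_mul, ← _root_.map_mul]
        congr 1
        simp only [ell]
        group

end D
end MetPC


/-- A word `w ∈ F_d` lies in the second derived subgroup `F_d'' = [F_d', F_d']` iff
`D w = 0`; equivalently, two words represent the same element of the free metabelian
group `Met(d) = F_d/F_d''` iff their paths on the lattice `E^d` traverse every edge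
with the same algebraic multiplicity, i.e. `D w₁ = D w₂`. -/
theorem metabelian_path_criterion {d : ℕ} (hd : 1 ≤ d)
    (D : FreeGroup (Fin d) → C1Z d)
    (hD1 : ∀ i : Fin d, D (FreeGroup.of i) = Finsupp.single ((0 : Zd d), i) 1)
    (hDmul : ∀ u v : FreeGroup (Fin d),
      D (u * v) = D u + shiftZ d (Multiplicative.toAdd (phiZ d u)) (D v)) :
    (∀ w : FreeGroup (Fin d),
      w ∈ (⁅commutator (FreeGroup (Fin d)), commutator (FreeGroup (Fin d))⁆ :
        Subgroup (FreeGroup (Fin d))) ↔ D w = 0) ∧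
    (∀ w₁ w₂ : FreeGroup (Fin d),
      (QuotientGroup.mk w₁ : FreeGroup (Fin d) ⧸
          (⁅commutator (FreeGroup (Fin d)), commutator (FreeGroup (Fin d))⁆ :
            Subgroup (FreeGroup (Fin d)))) = QuotientGroup.mk w₂ ↔
        D w₁ = D w₂) := by
  classical
  have hDone : D 1 = 0 := MetPC.D_one D hDmul
  have hDinv : ∀ w, D w⁻¹
      = - shiftZ d (-(Multiplicative.toAdd (phiZ d w))) (D w) := MetPC.D_inv D hDmul
  -- the subgroup of words with trivial image and trivial chain
  set S : Subgroup (FreeGroup (Fin d)) :=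
    { carrier := {w | phiZ d w = 1 ∧ D w = 0}
      one_mem' := ⟨map_one _, hDone⟩
      mul_mem' := by
        rintro a b ⟨ha1, ha2⟩ ⟨hb1, hb2⟩
        refine ⟨by rw [map_mul, ha1, hb1, mul_one], ?_⟩
        rw [hDmul, ha1, ha2, hb2, map_zero, add_zero]
      inv_mem' := by
        rintro a ⟨ha1, ha2⟩
        refine ⟨by rw [map_inv, ha1, inv_one], ?_⟩
        rw [hDinv, ha2, map_zero, neg_zero] } with hS
  have part1 : ∀ w : FreeGroup (Fin d), w ∈ MetPC.Nsub d ↔ D w = 0 := by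
    intro w
    constructor
    · intro hw
      have hle : MetPC.Nsub d ≤ S := by
        rw [Subgroup.commutator_le]
        intro g hg h hh
        have hg1 : phiZ d g = 1 := MetPC.commutator_le_ker hg
        have hh1 : phiZ d h = 1 := MetPC.commutator_le_ker hh
        refine ⟨?_, ?_⟩
        · rw [map_commutatorElement, hg1, hh1]
          simp
        · rw [commutatorElement_def]
          have e1 : D (g * h) = D g + D h := by
            rw [hDmul, hg1]
            simp [MetPC.shiftZ_zero]
          have e2 : phiZ d (g * h) = 1 := by rw [map_mul, hg1, hh1, mul_one]
          have e3 : D g⁻¹ = - D g := by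
            rw [hDinv, hg1]
            simp [MetPC.shiftZ_zero]
          have e4 : D h⁻¹ = - D h := by
            rw [hDinv, hh1]
            simp [MetPC.shiftZ_zero]
          have e5 : D (g * h * g⁻¹) = D g + D h + - D g := by
            rw [hDmul, e2, e1, e3]
            simp [MetPC.shiftZ_zero]
          have e6 : phiZ d (g * h * g⁻¹) = 1 := by
            rw [map_mul, e2, map_inv, hg1]
            simp
          rw [hDmul, e5, e6, e4]
          simp [MetPC.shiftZ_zero]
      exact (hle hw).2
    · intro hw
      have hphi : phiZ d w = 1 := MetPC.phiZ_eq_one_of_D D hD1 hDmul w hw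
      have hKL := MetPC.KL D hD1 hDmul w
      rw [hw, hphi, MetPC.Jm_zero, one_mul,
        show Multiplicative.toAdd (1 : Multiplicative (Zd d)) = 0 from rfl,
        MetPC.pcan_zero, map_one] at hKL
      rw [QuotientGroup.mk'_apply] at hKL
      exact (QuotientGroup.eq_one_iff w).mp hKL
  refine ⟨part1, fun w₁ w₂ => ?_⟩
  rw [QuotientGroup.eq]
  rw [part1]
  have hD12 : D (w₁⁻¹ * w₂)
      = shiftZ d (-(Multiplicative.toAdd (phiZ d w₁))) (D w₂ - D w₁) := by
    rw [hDmul, hDinv, map_inv, toAdd_inv, map_sub]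
    abel
  rw [hD12]
  constructor
  · intro h
    have h2 : D w₂ - D w₁ = 0 :=
      MetPC.shiftZ_inj (-(Multiplicative.toAdd (phiZ d w₁)))
        (by rw [map_zero]; exact h)
    exact (sub_eq_zero.mp h2).symm
  · intro h
    rw [h]
    simp
end
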